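/- arXiv:0710.5751 — 4 statements merged into one kernel-verified Lean document; each statement's English description precedes it below -/
import Mathlib

section
/- Let x ∈ Q(R) be dominant, fix a simple root α_{i₀}, and suppose z = y + (1/2)α_{i₀} lies in Q(R), where (i) ⟨y, α_{i₀}^∨⟩ = 0, (ii) y is dominant, and (iii) ⟨y, ϖ_i⟩ ≤ ⟨x, ϖ_i⟩ for all i ∈ I. Then z ∈ Conv(O_x). -/
open Module

/-- An irreducible reduced (crystallographic) root system `R` in a real vector space `V`
(playing the role of `Q(R) ⊗ ℝ`), together with a base of simple roots indexed by `ι`,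
the coroot pairings `u ↦ ⟨u, α^∨⟩` realised as linear functionals, and the fundamental
coweights `ϖ_i`, characterised by `⟨ϖ_i, α_j⟩ = δ_{ij}`. -/
structure RootSystemData (ι : Type*) (V : Type*) [Fintype ι] [DecidableEq ι]
    [AddCommGroup V] [Module ℝ V] where
  /-- the set of roots `R` -/
  isRoot : Set V
  /-- the coroot pairing: `coroot a u = ⟨u, a^∨⟩` -/
  coroot : V → (V →ₗ[ℝ] ℝ)
  /-- the simple roots `α_i` -/
  sroot : ι → V
  sroot_mem : ∀ i, sroot i ∈ isRoot
  coroot_self : ∀ a ∈ isRoot, coroot a a = 2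
  crystallographic : ∀ a ∈ isRoot, ∀ b ∈ isRoot, ∃ n : ℤ, coroot a b = (n : ℝ)
  reflect_mem : ∀ a ∈ isRoot, ∀ b ∈ isRoot, b - coroot a b • a ∈ isRoot
  reduced : ∀ a ∈ isRoot, ∀ t : ℝ, t • a ∈ isRoot → t = 1 ∨ t = -1
  finite : isRoot.Finite
  ne_zero : ∀ a ∈ isRoot, a ≠ 0
  span_top : Submodule.span ℝ isRoot = ⊤
  /-- every root is a nonnegative or nonpositive integral combination of the simple roots -/
  base : ∀ a ∈ isRoot, (∃ c : ι → ℕ, a = ∑ i, (c i : ℝ) • sroot i) ∨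
    (∃ c : ι → ℕ, a = -∑ i, (c i : ℝ) • sroot i)
  /-- the root system is irreducible -/
  irreducible : ∀ s t : Set V, isRoot = s ∪ t →
    (∀ a ∈ s, ∀ b ∈ t, coroot a b = 0) → s = ∅ ∨ t = ∅
  /-- the fundamental coweights `ϖ_i`, as linear functionals `u ↦ ⟨u, ϖ_i⟩` -/
  coweight : ι → (V →ₗ[ℝ] ℝ)
  coweight_sroot : ∀ i j, coweight i (sroot j) = if i = j then 1 else 0

namespace RootSystemData

variable {ι V : Type*} [Fintype ι] [DecidableEq ι] [AddCommGroup V] [Module ℝ V]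
variable (P : RootSystemData ι V)

/-- The root lattice `Q(R)`, i.e. the `ℤ`-span of the roots. -/
def rootLattice : AddSubgroup V := AddSubgroup.closure P.isRoot

/-- The Weyl group `W`, generated by the reflections in the roots. -/
def weylGroup : Subgroup (V ≃ₗ[ℝ] V) :=
  Subgroup.closure { w | ∃ a, ∃ ha : a ∈ P.isRoot, w = Module.reflection (P.coroot_self a ha) }

/-- The Weyl orbit `O_x = {wx : w ∈ W}` of an element `x`. -/
def orbit (x : V) : Set V := { v | ∃ w ∈ P.weylGroup, v = w x }

/-- An element `u` is dominant if `⟨u, α_i^∨⟩ ≥ 0` for all `i ∈ I`. -/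
def IsDominant (u : V) : Prop := ∀ i, 0 ≤ P.coroot (P.sroot i) u

/-- The simple reflection `s_{α_i}`. -/
def sref (i : ι) : V ≃ₗ[ℝ] V :=
  Module.reflection (P.coroot_self (P.sroot i) (P.sroot_mem i))

end RootSystemData
open Module

namespace RootSystemData

variable {ι V : Type*} [Fintype ι] [DecidableEq ι] [AddCommGroup V] [Module ℝ V]
variable (P : RootSystemData ι V)

/-- positivity of coordinates -/
def IsPos (a : V) : Prop := ∀ i, 0 ≤ P.coweight i a

lemma coweight_sum (c : ι → ℝ) (j : ι) :
    P.coweight j (∑ i, c i • P.sroot i) = c j := by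
  rw [map_sum]
  simp_rw [map_smul, P.coweight_sroot, smul_eq_mul]
  simp

lemma coords (v : V) : ∑ i, P.coweight i v • P.sroot i = v := by
  have h : (∑ i, (P.coweight i).smulRight (P.sroot i) : V →ₗ[ℝ] V) = LinearMap.id := by
    apply LinearMap.ext_on P.span_top
    intro a ha
    rcases P.base a ha with ⟨c, hc⟩ | ⟨c, hc⟩
    · subst hc
      simp only [LinearMap.sum_apply, LinearMap.smulRight_apply, LinearMap.id_apply]
      have : ∀ j, P.coweight j (∑ i, (c i : ℝ) • P.sroot i) = c j := fun j => P.coweight_sum _ j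
      calc ∑ i, P.coweight i (∑ k, (c k : ℝ) • P.sroot k) • P.sroot i
          = ∑ i, (c i : ℝ) • P.sroot i := by simp_rw [this]
        _ = _ := rfl
    · have hc' : a = ∑ i, (-(c i) : ℝ) • P.sroot i := by
        rw [hc, ← Finset.sum_neg_distrib]
        simp [neg_smul]
      rw [hc']
      simp only [LinearMap.sum_apply, LinearMap.smulRight_apply, LinearMap.id_apply]
      have : ∀ j, P.coweight j (∑ i, (-(c i) : ℝ) • P.sroot i) = -(c j) := fun j => P.coweight_sum _ j
      simp_rw [this]
  have := LinearMap.congr_fun h v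
  simpa using this

lemma eq_zero_of_coweight (v : V) (h : ∀ i, P.coweight i v = 0) : v = 0 := by
  have := P.coords v
  simp_rw [h, zero_smul, Finset.sum_const_zero] at this
  exact this.symm

lemma neg_mem {a : V} (ha : a ∈ P.isRoot) : -a ∈ P.isRoot := by
  have := P.reflect_mem a ha a ha
  rw [P.coroot_self a ha] at this
  have h2 : a - (2:ℝ) • a = -a := by module
  rwa [h2] at this

lemma pos_or_neg {a : V} (ha : a ∈ P.isRoot) : P.IsPos a ∨ P.IsPos (-a) := by
  rcases P.base a ha with ⟨c, hc⟩ | ⟨c, hc⟩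
  · left; intro i
    rw [hc, P.coweight_sum]
    positivity
  · right; intro i
    rw [hc]
    simp only [map_neg, neg_neg, P.coweight_sum]
    positivity

lemma not_pos_and_neg {a : V} (ha : a ∈ P.isRoot) (h1 : P.IsPos a) (h2 : P.IsPos (-a)) :
    False := by
  have : a = 0 := by
    apply P.eq_zero_of_coweight
    intro i
    have := h1 i
    have h2' := h2 i
    rw [map_neg] at h2'
    linarith
  exact P.ne_zero a ha this

lemma coweight_root_int {a : V} (ha : a ∈ P.isRoot) (i : ι) :
    ∃ n : ℤ, P.coweight i a = n := by
  rcases P.base a ha with ⟨c, hc⟩ | ⟨c, hc⟩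
  · exact ⟨c i, by rw [hc, P.coweight_sum]; norm_num⟩
  · refine ⟨-(c i), ?_⟩
    rw [hc]
    simp [P.coweight_sum]

lemma coweight_lattice_int {q : V} (hq : q ∈ P.rootLattice) (i : ι) :
    ∃ n : ℤ, P.coweight i q = n := by
  induction hq using AddSubgroup.closure_induction with
  | mem a ha => exact P.coweight_root_int ha i
  | zero => exact ⟨0, by simp⟩
  | add a b _ _ iha ihb =>
    obtain ⟨n, hn⟩ := iha; obtain ⟨m, hm⟩ := ihb
    exact ⟨n + m, by rw [map_add, hn, hm]; push_cast; ring⟩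
  | neg a _ iha =>
    obtain ⟨n, hn⟩ := iha
    exact ⟨-n, by rw [map_neg, hn]; push_cast; ring⟩

lemma coroot_lattice_int {a : V} (ha : a ∈ P.isRoot) {q : V} (hq : q ∈ P.rootLattice) :
    ∃ n : ℤ, P.coroot a q = n := by
  induction hq using AddSubgroup.closure_induction with
  | mem b hb => exact P.crystallographic a ha b hb
  | zero => exact ⟨0, by simp⟩
  | add b c _ _ ihb ihc =>
    obtain ⟨n, hn⟩ := ihb; obtain ⟨m, hm⟩ := ihc
    exact ⟨n + m, by rw [map_add, hn, hm]; push_cast; ring⟩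
  | neg b _ ihb =>
    obtain ⟨n, hn⟩ := ihb
    exact ⟨-n, by rw [map_neg, hn]; push_cast; ring⟩

lemma root_mem_lattice {a : V} (ha : a ∈ P.isRoot) : a ∈ P.rootLattice :=
  AddSubgroup.subset_closure ha

lemma sroot_isPos (i : ι) : P.IsPos (P.sroot i) := by
  intro j
  rw [P.coweight_sroot]
  split <;> norm_num

lemma sref_apply (i : ι) (v : V) :
    P.sref i v = v - P.coroot (P.sroot i) v • P.sroot i :=
  Module.reflection_apply v _

lemma coweight_sref (i j : ι) (v : V) :
    P.coweight j (P.sref i v) =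
      P.coweight j v - (if j = i then P.coroot (P.sroot i) v else 0) := by
  rw [P.sref_apply, map_sub, map_smul, P.coweight_sroot, smul_eq_mul]
  split <;> ring_nf

/-- If `a` is a positive root different from `α_i`, then `s_i a` is again a positive
root different from `α_i`. -/
lemma sref_perm {a : V} (ha : a ∈ P.isRoot) (hpos : P.IsPos a) (i : ι)
    (hne : a ≠ P.sroot i) :
    P.sref i a ∈ P.isRoot ∧ P.IsPos (P.sref i a) ∧ P.sref i a ≠ P.sroot i := by
  have hmem : P.sref i a ∈ P.isRoot := by
    rw [P.sref_apply]
    exact P.reflect_mem _ (P.sroot_mem i) a ha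
  -- there is k ≠ i with positive coordinate
  have hk : ∃ k, k ≠ i ∧ 0 < P.coweight k a := by
    by_contra h
    push_neg at h
    have hcoord : ∀ k, k ≠ i → P.coweight k a = 0 := fun k hki => le_antisymm (h k hki) (hpos k)
    have : a = P.coweight i a • P.sroot i := by
      conv_lhs => rw [← P.coords a]
      rw [Finset.sum_eq_single i]
      · intro k _ hki; rw [hcoord k hki, zero_smul]
      · intro hi; exact absurd (Finset.mem_univ i) hi
    rcases P.reduced (P.sroot i) (P.sroot_mem i) (P.coweight i a) (by rw [← this]; exact ha) with h1 | h1
    · exact hne (by rw [this, h1, one_smul])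
    · have := hpos i; rw [h1] at this; linarith
  obtain ⟨k, hki, hkpos⟩ := hk
  have hkeep : P.coweight k (P.sref i a) = P.coweight k a := by
    rw [P.coweight_sref, if_neg hki, sub_zero]
  have hpos' : P.IsPos (P.sref i a) := by
    rcases P.pos_or_neg hmem with h | h
    · exact h
    · exfalso
      have := h k
      rw [map_neg, hkeep] at this
      linarith
  refine ⟨hmem, hpos', ?_⟩
  intro hcontra
  have : P.coweight k (P.sroot i) = P.coweight k a := by rw [← hcontra, hkeep]
  rw [P.coweight_sroot, if_neg hki] at this
  linarith

lemma cartan_nonpos {k j : ι} (h : k ≠ j) :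
    P.coroot (P.sroot j) (P.sroot k) ≤ 0 := by
  have hne : P.sroot k ≠ P.sroot j := by
    intro hc
    have := P.coweight_sroot k k
    rw [if_pos rfl] at this
    rw [hc, P.coweight_sroot, if_neg h] at this
    linarith
  obtain ⟨-, hpos, -⟩ := P.sref_perm (P.sroot_mem k) (P.sroot_isPos k) j hne
  have := hpos j
  rw [P.coweight_sref, if_pos rfl, P.coweight_sroot, if_neg (Ne.symm h)] at this
  linarith


/-- The reflection in an arbitrary root, as a linear equivalence. -/
noncomputable def reflRoot {a : V} (ha : a ∈ P.isRoot) : V ≃ₗ[ℝ] V :=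
  Module.reflection (P.coroot_self a ha)

lemma reflRoot_apply {a : V} (ha : a ∈ P.isRoot) (v : V) :
    P.reflRoot ha v = v - P.coroot a v • a :=
  Module.reflection_apply v _

lemma reflRoot_mem {a : V} (ha : a ∈ P.isRoot) : P.reflRoot ha ∈ P.weylGroup :=
  Subgroup.subset_closure ⟨a, ha, rfl⟩

lemma sref_mem (i : ι) : P.sref i ∈ P.weylGroup :=
  Subgroup.subset_closure ⟨P.sroot i, P.sroot_mem i, rfl⟩

lemma one_mem_weyl : (1 : V ≃ₗ[ℝ] V) ∈ P.weylGroup := P.weylGroup.one_mem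

lemma weyl_root_mem {w : V ≃ₗ[ℝ] V} (hw : w ∈ P.weylGroup) :
    ∀ a ∈ P.isRoot, w a ∈ P.isRoot := by
  induction hw using Subgroup.closure_induction with
  | mem w hwmem =>
    obtain ⟨b, hb, rfl⟩ := hwmem
    intro a ha
    rw [Module.reflection_apply]
    exact P.reflect_mem b hb a ha
  | one => intro a ha; simpa using ha
  | mul w₁ w₂ _ _ ih₁ ih₂ =>
    intro a ha
    have : (w₁ * w₂) a = w₁ (w₂ a) := rfl
    rw [this]
    exact ih₁ _ (ih₂ a ha)
  | inv w hwmem ih =>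
    intro a ha
    have hmt : Set.MapsTo w P.isRoot P.isRoot := fun b hb => ih b hb
    have hinj : Set.InjOn w P.isRoot := fun b _ c _ h => w.injective h
    have hbij : Set.BijOn w P.isRoot P.isRoot :=
      (Set.Finite.injOn_iff_bijOn_of_mapsTo P.finite hmt).mp hinj
    obtain ⟨b, hb, hba⟩ := hbij.surjOn ha
    have : w⁻¹ a = b := by
      have : w b = a := hba
      rw [← this]
      exact w.symm_apply_apply b
    rw [this]; exact hb

lemma weyl_ext {w₁ w₂ : V ≃ₗ[ℝ] V} (h : ∀ a ∈ P.isRoot, w₁ a = w₂ a) : w₁ = w₂ := by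
  apply LinearEquiv.toLinearMap_injective
  exact LinearMap.ext_on P.span_top h

instance finite_weyl : Finite ↥P.weylGroup := by
  classical
  have : Finite ↥P.isRoot := P.finite
  let F : ↥P.weylGroup → (↥P.isRoot → ↥P.isRoot) := fun w a =>
    ⟨(w : V ≃ₗ[ℝ] V) a, P.weyl_root_mem w.2 a a.2⟩
  have hF : Function.Injective F := by
    intro w₁ w₂ h
    apply Subtype.ext
    apply P.weyl_ext
    intro a ha
    have := congr_fun h ⟨a, ha⟩
    exact congr_arg Subtype.val this
  exact Finite.of_injective F hF

noncomputable instance fintype_weyl : Fintype ↥P.weylGroup := Fintype.ofFinite _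

/-- A `W`-invariant inner product on `V`. -/
noncomputable def B (u v : V) : ℝ :=
  ∑ w : ↥P.weylGroup, ∑ i, P.coweight i ((w : V ≃ₗ[ℝ] V) u) * P.coweight i ((w : V ≃ₗ[ℝ] V) v)

lemma B_symm (u v : V) : P.B u v = P.B v u := by
  unfold B; congr 1; ext w; congr 1; ext i; ring

lemma B_add_left (u u' v : V) : P.B (u + u') v = P.B u v + P.B u' v := by
  unfold B
  rw [← Finset.sum_add_distrib]
  congr 1; ext w
  rw [← Finset.sum_add_distrib]
  congr 1; ext i
  rw [map_add, map_add]
  ring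

lemma B_smul_left (c : ℝ) (u v : V) : P.B (c • u) v = c * P.B u v := by
  unfold B
  rw [Finset.mul_sum]
  congr 1; ext w
  rw [Finset.mul_sum]
  congr 1; ext i
  rw [map_smul, map_smul]
  simp; ring

lemma B_add_right (u v v' : V) : P.B u (v + v') = P.B u v + P.B u v' := by
  rw [B_symm, B_add_left, B_symm, P.B_symm v' u]

lemma B_smul_right (c : ℝ) (u v : V) : P.B u (c • v) = c * P.B u v := by
  rw [B_symm, B_smul_left, B_symm]

lemma B_nonneg (v : V) : 0 ≤ P.B v v := by
  unfold B
  apply Finset.sum_nonneg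
  intro w _
  apply Finset.sum_nonneg
  intro i _
  exact mul_self_nonneg _

lemma B_pos {v : V} (hv : v ≠ 0) : 0 < P.B v v := by
  rcases lt_or_eq_of_le (P.B_nonneg v) with h | h
  · exact h
  exfalso
  apply hv
  have h0 : ∀ w ∈ (Finset.univ : Finset ↥P.weylGroup),
      (∑ i, P.coweight i ((w : V ≃ₗ[ℝ] V) v) * P.coweight i ((w : V ≃ₗ[ℝ] V) v)) = 0 := by
    intro w _
    have := (Finset.sum_eq_zero_iff_of_nonneg (by
      intro w _; exact Finset.sum_nonneg (fun i _ => mul_self_nonneg _))).mp h.symm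
    exact this w (Finset.mem_univ w)
  have h1 := h0 ⟨1, P.one_mem_weyl⟩ (Finset.mem_univ _)
  have h2 : ∀ i ∈ (Finset.univ : Finset ι),
      P.coweight i (((1 : V ≃ₗ[ℝ] V)) v) * P.coweight i (((1 : V ≃ₗ[ℝ] V)) v) = 0 :=
    fun i _ => (Finset.sum_eq_zero_iff_of_nonneg (fun i _ => mul_self_nonneg _)).mp h1 i
      (Finset.mem_univ i)
  apply P.eq_zero_of_coweight
  intro i
  have := h2 i (Finset.mem_univ i)
  have h3 : P.coweight i v * P.coweight i v = 0 := by simpa using this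
  exact mul_self_eq_zero.mp h3

lemma B_weyl {w : V ≃ₗ[ℝ] V} (hw : w ∈ P.weylGroup) (u v : V) :
    P.B (w u) (w v) = P.B u v := by
  unfold B
  apply Fintype.sum_equiv (Equiv.mulRight (⟨w, hw⟩ : ↥P.weylGroup))
  intro w'
  have h1 : ((((Equiv.mulRight (⟨w, hw⟩ : ↥P.weylGroup)) w' : ↥P.weylGroup) : V ≃ₗ[ℝ] V)) =
      (w' : V ≃ₗ[ℝ] V) * w := rfl
  rw [h1]
  congr 1

lemma coroot_eq_B {a : V} (ha : a ∈ P.isRoot) (v : V) :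
    P.coroot a v = 2 * P.B a v / P.B a a := by
  have hBa : 0 < P.B a a := P.B_pos (P.ne_zero a ha)
  have hinv := P.B_weyl (P.reflRoot_mem ha) a v
  rw [P.reflRoot_apply ha a, P.reflRoot_apply ha v, P.coroot_self a ha] at hinv
  have h2 : a - (2:ℝ) • a = -a := by module
  rw [h2] at hinv
  have : -(P.B a v) + P.coroot a v * P.B a a = -P.B a v + 2 * P.B a v - P.coroot a v * P.B a a
      + P.coroot a v * P.B a a := by
    have hexp : P.B (-a) (v - P.coroot a v • a) =
        -P.B a v + P.coroot a v * P.B a a := by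
      have : v - P.coroot a v • a = v + (-(P.coroot a v)) • a := by module
      rw [this, B_add_right, B_smul_right]
      have hneg : P.B (-a) v = -P.B a v := by
        have : (-a : V) = (-1 : ℝ) • a := by module
        rw [this, B_smul_left]; ring
      have hneg2 : P.B (-a) a = -P.B a a := by
        have : (-a : V) = (-1 : ℝ) • a := by module
        rw [this, B_smul_left]; ring
      rw [hneg, hneg2]; ring
    rw [hexp] at hinv
    linarith
  have hkey : 2 * P.B a v = P.coroot a v * P.B a a + P.coroot a v * P.B a a - P.coroot a v * P.B a a := by
    linarith
  field_simp
  linarith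

lemma coroot_weyl {w : V ≃ₗ[ℝ] V} (hw : w ∈ P.weylGroup) {a : V} (ha : a ∈ P.isRoot) (v : V) :
    P.coroot (w a) (w v) = P.coroot a v := by
  rw [P.coroot_eq_B (P.weyl_root_mem hw a ha), P.coroot_eq_B ha, P.B_weyl hw, P.B_weyl hw]

lemma reflRoot_conj {w : V ≃ₗ[ℝ] V} (hw : w ∈ P.weylGroup) {a : V} (ha : a ∈ P.isRoot) :
    P.reflRoot (P.weyl_root_mem hw a ha) = w * P.reflRoot ha * w⁻¹ := by
  apply P.weyl_ext
  intro b hb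
  have h1 : (w * P.reflRoot ha * w⁻¹) b = w (P.reflRoot ha (w⁻¹ b)) := rfl
  rw [h1, P.reflRoot_apply, P.reflRoot_apply]
  rw [map_sub, map_smul]
  have h2 : w (w⁻¹ b) = b := by
    exact w.apply_symm_apply b
  rw [h2]
  have h3 : P.coroot a (w⁻¹ b) = P.coroot (w a) b := by
    have := P.coroot_weyl hw ha (w⁻¹ b)
    rw [h2] at this
    exact this.symm
  rw [h3]

lemma coroot_nonneg_of_dominant {y : V} (hy : P.IsDominant y) {a : V} (ha : a ∈ P.isRoot)
    (hpos : P.IsPos a) : 0 ≤ P.coroot a y := by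
  rw [P.coroot_eq_B ha]
  have hBa : 0 < P.B a a := P.B_pos (P.ne_zero a ha)
  apply div_nonneg _ (le_of_lt hBa)
  have hBy : 0 ≤ P.B a y := by
    rw [P.B_symm]
    have hya : P.B y a = ∑ i, P.coweight i a * P.B y (P.sroot i) := by
      conv_lhs => rw [← P.coords a]
      rw [show P.B y (∑ i, P.coweight i a • P.sroot i)
          = ∑ i, P.B y (P.coweight i a • P.sroot i) by
        {
          induction (Finset.univ : Finset ι) using Finset.induction with
          | empty => simp [show P.B y 0 = 0 by
              have : (0:V) = (0:ℝ) • (0:V) := by simp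
              rw [this, B_smul_right]; ring]
          | insert _ _ h ih =>
            rw [Finset.sum_insert h, Finset.sum_insert h, B_add_right, ih]
        }]
      congr 1; ext i
      rw [B_smul_right]
    rw [hya]
    apply Finset.sum_nonneg
    intro i _
    apply mul_nonneg (hpos i)
    have := hy i
    rw [P.coroot_eq_B (P.sroot_mem i)] at this
    have hBi : 0 < P.B (P.sroot i) (P.sroot i) := P.B_pos (P.ne_zero _ (P.sroot_mem i))
    rw [P.B_symm]
    have h5 : (2 * P.B (P.sroot i) y / P.B (P.sroot i) (P.sroot i)) * P.B (P.sroot i) (P.sroot i)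
        = 2 * P.B (P.sroot i) y := by field_simp
    nlinarith [mul_nonneg this (le_of_lt hBi)]
  linarith

lemma cauchy_schwarz (a b : V) (hb : b ≠ 0) :
    P.B a b ^ 2 ≤ P.B a a * P.B b b ∧ (P.B a b ^ 2 = P.B a a * P.B b b → ∃ t : ℝ, a = t • b) := by
  have hBb : 0 < P.B b b := P.B_pos hb
  set t := P.B a b / P.B b b with ht
  have hexp : P.B (a - t • b) (a - t • b) = P.B a a - P.B a b ^ 2 / P.B b b := by
    have h1 : a - t • b = a + (-t) • b := by module
    have hexp0 : P.B (a - t • b) (a - t • b)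
        = P.B a a - 2 * t * P.B a b + t ^ 2 * P.B b b := by
      rw [h1, B_add_left, B_add_right, B_add_right, B_smul_left, B_smul_right, B_smul_left,
        B_smul_right, P.B_symm b a]
      ring
    rw [hexp0, ht]
    field_simp
    ring
  have hge : 0 ≤ P.B a a - P.B a b ^ 2 / P.B b b := by
    rw [← hexp]; exact P.B_nonneg _
  have hgem : 0 ≤ P.B a a * P.B b b - P.B a b ^ 2 := by
    have hm := mul_nonneg hge (le_of_lt hBb)
    have hid : (P.B a a - P.B a b ^ 2 / P.B b b) * P.B b b
        = P.B a a * P.B b b - P.B a b ^ 2 := by field_simp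
    rw [hid] at hm
    exact hm
  constructor
  · linarith
  · intro heq
    have : P.B (a - t • b) (a - t • b) = 0 := by
      rw [hexp]
      rw [heq]
      field_simp
      ring
    by_cases hz : a - t • b = 0
    · exact ⟨t, by rw [← sub_eq_zero]; exact hz⟩
    · exact absurd this (ne_of_gt (P.B_pos hz))

lemma coroot_ge_neg_three {a b : V} (ha : a ∈ P.isRoot) (hb : b ∈ P.isRoot)
    (hne : a ≠ -b) : (-3 : ℝ) ≤ P.coroot b a := by
  by_cases hab : 0 ≤ P.B b a
  · rw [P.coroot_eq_B hb]
    have hBb : 0 < P.B b b := P.B_pos (P.ne_zero b hb)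
    have : 0 ≤ 2 * P.B b a / P.B b b := div_nonneg (by linarith) (le_of_lt hBb)
    linarith
  push_neg at hab
  obtain ⟨p, hp⟩ := P.crystallographic b hb a ha
  obtain ⟨q, hq⟩ := P.crystallographic a ha b hb
  have hBa : 0 < P.B a a := P.B_pos (P.ne_zero a ha)
  have hBb : 0 < P.B b b := P.B_pos (P.ne_zero b hb)
  have hpq : (p : ℝ) * q = 4 * P.B a b ^ 2 / (P.B a a * P.B b b) := by
    rw [← hp, ← hq, P.coroot_eq_B hb a, P.coroot_eq_B ha b]
    rw [P.B_symm b a]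
    field_simp
    ring
  obtain ⟨hcs, hcseq⟩ := P.cauchy_schwarz a b (P.ne_zero b hb)
  rcases lt_or_eq_of_le hcs with hlt | heq
  · -- strict: p*q < 4, so p*q ≤ 3 as integers
    have h4 : (p:ℝ) * q < 4 := by
      rw [hpq]
      rw [div_lt_iff₀ (by positivity)]
      nlinarith
    have hint : p * q < 4 := by exact_mod_cast h4
    have hppos : (p:ℝ) < 0 := by
      rw [← hp, P.coroot_eq_B hb]
      apply div_neg_of_neg_of_pos _ hBb
      rw [P.B_symm] at hab ⊢
      linarith
    have hqpos : (q:ℝ) < 0 := by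
      rw [← hq, P.coroot_eq_B ha]
      apply div_neg_of_neg_of_pos _ hBa
      rw [P.B_symm] at hab
      linarith [hab]
    have hpneg : p ≤ -1 := by
      have : p < 0 := by exact_mod_cast hppos
      omega
    have hqneg : q ≤ -1 := by
      have : q < 0 := by exact_mod_cast hqpos
      omega
    have : -p ≤ (-p) * (-q) := by nlinarith
    have hple : -p ≤ 3 := by nlinarith
    rw [hp]
    have : (-3 : ℤ) ≤ p := by linarith
    exact_mod_cast this
  · -- equality: a = t • b with t = ±1
    obtain ⟨t, hta⟩ := hcseq heq
    rcases P.reduced b hb t (by rw [← hta]; exact ha) with h1 | h1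
    · subst h1
      rw [one_smul] at hta
      subst hta
      rw [P.coroot_self a ha]
      norm_num
    · exfalso
      apply hne
      rw [hta, h1]
      module

lemma coroot_neg_root {a : V} (ha : a ∈ P.isRoot) (v : V) :
    P.coroot (-a) v = -(P.coroot a v) := by
  rw [P.coroot_eq_B (P.neg_mem ha), P.coroot_eq_B ha]
  have h1 : (-a : V) = (-1 : ℝ) • a := by module
  rw [h1, B_smul_left, B_smul_right, B_smul_left]
  have hBa : 0 < P.B a a := P.B_pos (P.ne_zero a ha)
  field_simp

lemma reflRoot_congr {a b : V} (ha : a ∈ P.isRoot) (hb : b ∈ P.isRoot) (h : a = b) :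
    P.reflRoot ha = P.reflRoot hb := by subst h; rfl

lemma reflRoot_neg {a : V} (ha : a ∈ P.isRoot) :
    P.reflRoot (P.neg_mem ha) = P.reflRoot ha := by
  apply P.weyl_ext
  intro b hb
  rw [P.reflRoot_apply, P.reflRoot_apply, P.coroot_neg_root ha]
  module

lemma B_sum_left {κ : Type*} (s : Finset κ) (f : κ → V) (u : V) :
    P.B (∑ k ∈ s, f k) u = ∑ k ∈ s, P.B (f k) u := by
  classical
  induction s using Finset.induction with
  | empty =>
    simp only [Finset.sum_empty]
    have : (0 : V) = (0:ℝ) • (0:V) := by simp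
    rw [this, B_smul_left]; ring
  | insert _ _ h ih =>
    rw [Finset.sum_insert h, Finset.sum_insert h, B_add_left, ih]

lemma B_expand_left (v u : V) : P.B v u = ∑ i, P.coweight i v * P.B (P.sroot i) u := by
  conv_lhs => rw [← P.coords v]
  rw [P.B_sum_left]
  congr 1; ext i
  rw [B_smul_left]

/-- Product of simple reflections along a word. -/
noncomputable def wordProd (l : List ι) : V ≃ₗ[ℝ] V := (l.map P.sref).prod

lemma wordProd_nil : P.wordProd [] = 1 := rfl

lemma wordProd_cons (j : ι) (l : List ι) :
    P.wordProd (j :: l) = P.sref j * P.wordProd l := by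
  unfold wordProd
  rw [List.map_cons, List.prod_cons]

lemma wordProd_append (l₁ l₂ : List ι) :
    P.wordProd (l₁ ++ l₂) = P.wordProd l₁ * P.wordProd l₂ := by
  unfold wordProd
  rw [List.map_append, List.prod_append]

lemma wordProd_mem (l : List ι) : P.wordProd l ∈ P.weylGroup := by
  induction l with
  | nil => exact P.one_mem_weyl
  | cons j l ih =>
    rw [P.wordProd_cons]
    exact P.weylGroup.mul_mem (P.sref_mem j) ih

lemma sref_inv (i : ι) : (P.sref i)⁻¹ = P.sref i := by
  apply P.weyl_ext
  intro a ha
  have h := Module.involutive_reflection (P.coroot_self (P.sroot i) (P.sroot_mem i))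
  have h2 : P.sref i (P.sref i a) = a := h a
  calc (P.sref i)⁻¹ a = (P.sref i)⁻¹ (P.sref i (P.sref i a)) := by rw [h2]
    _ = P.sref i a := (P.sref i).symm_apply_apply _

lemma wordProd_reverse (l : List ι) : P.wordProd l.reverse = (P.wordProd l)⁻¹ := by
  induction l with
  | nil => simp [wordProd_nil]
  | cons j l ih =>
    have hj : P.wordProd [j] = P.sref j := by
      rw [show [j] = j :: ([] : List ι) from rfl, P.wordProd_cons, P.wordProd_nil, mul_one]
    rw [List.reverse_cons, P.wordProd_append, ih, hj, P.wordProd_cons, mul_inv_rev, P.sref_inv]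

lemma exists_word_reflRoot_pos (n : ℕ) :
    ∀ (a : V) (ha : a ∈ P.isRoot), P.IsPos a → (∑ i, P.coweight i a) ≤ n →
    ∃ l, P.reflRoot ha = P.wordProd l := by
  induction n with
  | zero =>
    intro a ha hpos hsum
    exfalso
    apply P.ne_zero a ha
    apply P.eq_zero_of_coweight
    intro i
    have h1 : ∀ j ∈ (Finset.univ : Finset ι), 0 ≤ P.coweight j a := fun j _ => hpos j
    have := Finset.sum_nonneg h1
    have heq : ∑ i, P.coweight i a = 0 := by push_cast at hsum; linarith
    have := (Finset.sum_eq_zero_iff_of_nonneg h1).mp heq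
    exact this i (Finset.mem_univ i)
  | succ n ih =>
    intro a ha hpos hsum
    by_cases hsimple : ∃ i, a = P.sroot i
    · obtain ⟨i, rfl⟩ := hsimple
      exact ⟨[i], by rw [P.wordProd_cons, P.wordProd_nil, mul_one]; rfl⟩
    · push_neg at hsimple
      -- find i with positive coordinate and positive pairing
      have hBa : 0 < P.B a a := P.B_pos (P.ne_zero a ha)
      have hexp := P.B_expand_left a a
      have hex : ∃ i, 0 < P.coweight i a * P.B (P.sroot i) a := by
        by_contra hno
        push_neg at hno
        have : P.B a a ≤ 0 := by
          rw [hexp]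
          exact Finset.sum_nonpos (fun i _ => hno i)
        linarith
      obtain ⟨i, hi⟩ := hex
      have hcw : 0 < P.coweight i a := by
        rcases lt_or_eq_of_le (hpos i) with h | h
        · exact h
        · exfalso; rw [← h] at hi; simp at hi
      have hBi : 0 < P.B (P.sroot i) a := by
        nlinarith [hpos i]
      have hcr : 0 < P.coroot (P.sroot i) a := by
        rw [P.coroot_eq_B (P.sroot_mem i)]
        have := P.B_pos (P.ne_zero _ (P.sroot_mem i))
        positivity
      have hcr1 : 1 ≤ P.coroot (P.sroot i) a := by
        obtain ⟨m, hm⟩ := P.crystallographic (P.sroot i) (P.sroot_mem i) a ha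
        rw [hm] at hcr ⊢
        exact_mod_cast (by exact_mod_cast hcr : (0:ℤ) < m)
      obtain ⟨hmem', hpos', -⟩ := P.sref_perm ha hpos i (hsimple i)
      -- height decreases
      have hsum' : ∑ k, P.coweight k (P.sref i a) ≤ n := by
        have hsplit : ∑ k, P.coweight k (P.sref i a)
            = (∑ k, P.coweight k a) - P.coroot (P.sroot i) a := by
          have hterm : ∀ k, P.coweight k (P.sref i a)
              = P.coweight k a - (if k = i then P.coroot (P.sroot i) a else 0) :=
            fun k => P.coweight_sref i k a
          simp_rw [hterm]
          rw [Finset.sum_sub_distrib]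
          congr 1
          rw [Finset.sum_ite_eq' Finset.univ i (fun _ => P.coroot (P.sroot i) a)]
          simp
        rw [hsplit]
        push_cast at hsum ⊢
        linarith
      obtain ⟨l, hl⟩ := ih (P.sref i a) hmem' hpos' hsum'
      refine ⟨[i] ++ l ++ [i], ?_⟩
      have hwa : P.sref i (P.sref i a) = a :=
        Module.involutive_reflection (P.coroot_self (P.sroot i) (P.sroot_mem i)) a
      have hconj := P.reflRoot_conj (P.sref_mem i) hmem'
      have hcongr : P.reflRoot ha
          = P.reflRoot (P.weyl_root_mem (P.sref_mem i) _ hmem') :=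
        P.reflRoot_congr _ _ hwa.symm
      rw [hcongr, hconj, hl]
      rw [P.wordProd_append, P.wordProd_append]
      have h1 : P.wordProd [i] = P.sref i := by
        rw [show [i] = i :: ([] : List ι) from rfl, P.wordProd_cons, P.wordProd_nil, mul_one]
      rw [h1, P.sref_inv]

lemma exists_word {w : V ≃ₗ[ℝ] V} (hw : w ∈ P.weylGroup) :
    ∃ l, P.wordProd l = w := by
  induction hw using Subgroup.closure_induction with
  | mem w hwmem =>
    obtain ⟨a, ha, rfl⟩ := hwmem
    have hrefl : Module.reflection (P.coroot_self a ha) = P.reflRoot ha := rfl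
    rcases P.pos_or_neg ha with hpos | hneg
    · obtain ⟨nn, hnn⟩ := exists_nat_ge (∑ i, P.coweight i a)
      obtain ⟨l, hl⟩ := P.exists_word_reflRoot_pos nn a ha hpos hnn
      exact ⟨l, by rw [hrefl, hl]⟩
    · obtain ⟨nn, hnn⟩ := exists_nat_ge (∑ i, P.coweight i (-a))
      obtain ⟨l, hl⟩ := P.exists_word_reflRoot_pos nn (-a) (P.neg_mem ha) hneg hnn
      refine ⟨l, ?_⟩
      rw [hrefl, ← P.reflRoot_neg ha, hl]
  | one => exact ⟨[], rfl⟩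
  | mul w₁ w₂ _ _ ih₁ ih₂ =>
    obtain ⟨l₁, hl₁⟩ := ih₁; obtain ⟨l₂, hl₂⟩ := ih₂
    exact ⟨l₁ ++ l₂, by rw [P.wordProd_append, hl₁, hl₂]⟩
  | inv w _ ih =>
    obtain ⟨l, hl⟩ := ih
    exact ⟨l.reverse, by rw [P.wordProd_reverse, hl]⟩

lemma mulApply (P : RootSystemData ι V) (w₁ w₂ : V ≃ₗ[ℝ] V) (v : V) :
    (w₁ * w₂) v = w₁ (w₂ v) := rfl

lemma sref_mul_self (i : ι) : P.sref i * P.sref i = 1 := by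
  conv_lhs => rw [← P.sref_inv i]
  exact inv_mul_cancel _

lemma wordProd_singleton (j : ι) : P.wordProd [j] = P.sref j := by
  rw [show [j] = j :: ([] : List ι) from rfl, P.wordProd_cons, P.wordProd_nil, mul_one]

/-- The deletion lemma: if a word sends the simple root `α_i` to a negative root, then
appending `i` to the word yields an element with a shorter expression. -/
lemma deletion (l : List ι) (i : ι) (hneg : ¬ P.IsPos (P.wordProd l (P.sroot i))) :
    ∃ l', P.wordProd (l ++ [i]) = P.wordProd l' ∧ l'.length + 1 = l.length := by
  induction l with
  | nil =>
    exfalso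
    apply hneg
    rw [P.wordProd_nil]
    simpa using P.sroot_isPos i
  | cons j rest ih =>
    have hβmem : P.wordProd rest (P.sroot i) ∈ P.isRoot :=
      P.weyl_root_mem (P.wordProd_mem rest) _ (P.sroot_mem i)
    by_cases hβ : P.IsPos (P.wordProd rest (P.sroot i))
    · -- then the current root is α_j reflected to negative, so β = α_j
      have hcur : P.wordProd (j :: rest) (P.sroot i)
          = P.sref j (P.wordProd rest (P.sroot i)) := by
        rw [P.wordProd_cons, P.mulApply]
      have hβj : P.wordProd rest (P.sroot i) = P.sroot j := by
        by_contra hne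
        obtain ⟨-, hpos', -⟩ := P.sref_perm hβmem hβ j hne
        apply hneg
        rw [hcur]
        exact hpos'
      -- s_j = (wordProd rest) s_i (wordProd rest)⁻¹
      have hconj := P.reflRoot_conj (P.wordProd_mem rest) (P.sroot_mem i)
      have hcongr : P.reflRoot (P.sroot_mem j)
          = P.reflRoot (P.weyl_root_mem (P.wordProd_mem rest) _ (P.sroot_mem i)) :=
        P.reflRoot_congr _ _ hβj.symm
      have hsj : P.sref j = P.wordProd rest * P.sref i * (P.wordProd rest)⁻¹ := by
        have h1 : P.sref j = P.reflRoot (P.sroot_mem j) := rfl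
        have h2 : P.sref i = P.reflRoot (P.sroot_mem i) := rfl
        rw [h1, hcongr, hconj, ← h2]
      refine ⟨rest, ?_, rfl⟩
      have : P.wordProd ((j :: rest) ++ [i])
          = P.sref j * P.wordProd rest * P.sref i := by
        rw [show (j :: rest) ++ [i] = j :: (rest ++ [i]) from rfl, P.wordProd_cons,
          P.wordProd_append, P.wordProd_singleton]
        group
      rw [this, hsj]
      calc P.wordProd rest * P.sref i * (P.wordProd rest)⁻¹ * P.wordProd rest * P.sref i
          = P.wordProd rest * (P.sref i * P.sref i) := by group
        _ = P.wordProd rest := by rw [P.sref_mul_self]; group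
    · obtain ⟨r', h1, h2⟩ := ih hβ
      refine ⟨j :: r', ?_, ?_⟩
      · rw [show (j :: rest) ++ [i] = j :: (rest ++ [i]) from rfl, P.wordProd_cons, h1,
          P.wordProd_cons]
      · simp only [List.length_cons]
        omega

lemma exists_min_word {w : V ≃ₗ[ℝ] V} (hw : w ∈ P.weylGroup) :
    ∃ l, P.wordProd l = w ∧ ∀ l', P.wordProd l' = w → l.length ≤ l'.length := by
  classical
  obtain ⟨l₀, hl₀⟩ := P.exists_word hw
  have hS : ∃ n, ∃ l : List ι, l.length = n ∧ P.wordProd l = w := ⟨l₀.length, l₀, rfl, hl₀⟩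
  obtain ⟨l, hlen, hprod⟩ := Nat.find_spec hS
  refine ⟨l, hprod, ?_⟩
  intro l' hl'
  rw [hlen]
  exact Nat.find_min' hS ⟨l', rfl, hl'⟩

/-- For a minimal word, the partial products applied to later letters give positive roots. -/
lemma phi_pos {m : List ι}
    (hmin : ∀ l', P.wordProd l' = P.wordProd m → m.length ≤ l'.length)
    {j : ι} {s : List ι} (hsuf : (j :: s) <:+ m) :
    P.IsPos (P.wordProd s.reverse (P.sroot j)) := by
  by_contra hneg
  obtain ⟨l'', h1, h2⟩ := P.deletion s.reverse j hneg
  obtain ⟨pre, hpre⟩ := hsuf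
  -- s_j * wordProd s = (wordProd (s.reverse ++ [j]))⁻¹ = wordProd l''.reverse
  have hkey : P.sref j * P.wordProd s = P.wordProd l''.reverse := by
    have e1 : P.wordProd (s.reverse ++ [j]) = (P.wordProd s)⁻¹ * P.sref j := by
      rw [P.wordProd_append, P.wordProd_reverse, P.wordProd_singleton]
    have e2 : (P.wordProd (s.reverse ++ [j]))⁻¹ = P.sref j * P.wordProd s := by
      rw [e1, mul_inv_rev, inv_inv, P.sref_inv]
    rw [← e2, h1, ← P.wordProd_reverse]
  have hm : P.wordProd m = P.wordProd (pre ++ l''.reverse) := by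
    rw [← hpre, P.wordProd_append, P.wordProd_append, P.wordProd_cons, ← mul_assoc,
      mul_assoc (P.wordProd pre), hkey]
  have hlen := hmin (pre ++ l''.reverse) hm.symm
  rw [← hpre] at hlen
  simp only [List.length_append, List.length_cons, List.length_reverse] at hlen h2 ⊢
  omega

lemma weyl_lattice_mem {w : V ≃ₗ[ℝ] V} (hw : w ∈ P.weylGroup) {q : V}
    (hq : q ∈ P.rootLattice) : w q ∈ P.rootLattice := by
  induction hq using AddSubgroup.closure_induction with
  | mem a ha => exact P.root_mem_lattice (P.weyl_root_mem hw a ha)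
  | zero => simpa using P.rootLattice.zero_mem
  | add a b _ _ iha ihb => rw [map_add]; exact P.rootLattice.add_mem iha ihb
  | neg a _ iha => rw [map_neg]; exact P.rootLattice.neg_mem iha

section Main

variable {x y z : V} {i₀ : ι}

/-- The key lemma: every element of the Weyl orbit of `z` is coordinatewise below `x`. -/
lemma orbit_coweight_le
    (hx : x ∈ P.rootLattice) (hxdom : P.IsDominant x)
    (hz : z = y + (1 / 2 : ℝ) • P.sroot i₀) (hzQ : z ∈ P.rootLattice)
    (h2 : P.IsDominant y)
    (h3 : ∀ i, P.coweight i y ≤ P.coweight i x) :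
    ∀ {w : V ≃ₗ[ℝ] V}, w ∈ P.weylGroup → ∀ i, P.coweight i (w z) ≤ P.coweight i x := by
  -- base case : z itself is below x
  have hbase : ∀ i, P.coweight i z ≤ P.coweight i x := by
    intro i
    by_cases hi : i = i₀
    · subst hi
      obtain ⟨n, hn⟩ := P.coweight_lattice_int hx i
      obtain ⟨m, hm⟩ := P.coweight_lattice_int hzQ i
      have hzy : P.coweight i z = P.coweight i y + 1/2 := by
        rw [hz, map_add, map_smul, P.coweight_sroot, if_pos rfl]
        norm_num
      have : (-(1:ℝ))/2 ≤ (n : ℝ) - m := by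
        rw [← hn, ← hm, hzy]
        have := h3 i
        linarith
      have hint : (0 : ℤ) ≤ n - m := by
        by_contra hc
        push_neg at hc
        have : n - m ≤ -1 := by omega
        have : ((n : ℝ) - m) ≤ -1 := by exact_mod_cast this
        linarith
      have : (0:ℝ) ≤ (n:ℝ) - m := by exact_mod_cast hint
      rw [← hn, ← hm] at this
      linarith
    · have hzy : P.coweight i z = P.coweight i y := by
        rw [hz, map_add, map_smul, P.coweight_sroot, if_neg hi]
        norm_num
      rw [hzy]
      exact h3 i
  intro w hw
  obtain ⟨m, hprod, hmin⟩ := P.exists_min_word hw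
  subst hprod
  -- induction over suffixes of the minimal word
  suffices h : ∀ s : List ι, s <:+ m → ∀ i, P.coweight i (P.wordProd s z) ≤ P.coweight i x by
    exact h m (List.suffix_refl m)
  intro s hsuf
  induction s with
  | nil =>
    intro i
    rw [P.wordProd_nil]
    exact hbase i
  | cons j s' ih =>
    have hs' : s' <:+ m := (List.suffix_cons j s').trans hsuf
    have IH := ih hs'
    intro i
    set v := P.wordProd s' z with hv
    have happly : P.wordProd (j :: s') z = P.sref j v := by
      rw [P.wordProd_cons, P.mulApply]
    rw [happly, P.coweight_sref]
    by_cases hij : i = j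
    case neg => rw [if_neg hij, sub_zero]; exact IH i
    subst hij
    rw [if_pos rfl]
    set t := P.coroot (P.sroot i) v with htdef
    rcases le_or_gt 0 t with hts | hts
    · have := IH i; linarith
    -- the raising case
    · -- γ is a positive root with t = ⟨z, γ^∨⟩
      set γ := P.wordProd s'.reverse (P.sroot i) with hγ
      have hγmem : γ ∈ P.isRoot :=
        P.weyl_root_mem (P.wordProd_mem s'.reverse) _ (P.sroot_mem i)
      have hγpos : P.IsPos γ := P.phi_pos hmin hsuf
      have hwγ : P.wordProd s' γ = P.sroot i := by
        rw [hγ, P.wordProd_reverse]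
        exact (P.wordProd s').apply_symm_apply _
      have hteq : t = P.coroot γ z := by
        have := P.coroot_weyl (P.wordProd_mem s') hγmem z
        rw [hwγ] at this
        rw [htdef, hv, this]
      -- t = ⟨y,γ^∨⟩ + ½⟨α₀,γ^∨⟩ ≥ -3/2
      have hty : P.coroot γ z = P.coroot γ y + (1/2) * P.coroot γ (P.sroot i₀) := by
        rw [hz, map_add, map_smul]
        norm_num
      have hy0 : 0 ≤ P.coroot γ y := P.coroot_nonneg_of_dominant h2 hγmem hγpos
      have hne : P.sroot i₀ ≠ -γ := by
        intro hc
        have hγeq : γ = -P.sroot i₀ := by rw [hc]; module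
        apply P.not_pos_and_neg (P.sroot_mem i₀) (P.sroot_isPos i₀)
        rw [← hγeq]
        exact hγpos
      have h3b : (-3 : ℝ) ≤ P.coroot γ (P.sroot i₀) :=
        P.coroot_ge_neg_three (P.sroot_mem i₀) hγmem hne
      have htlb : (-3/2 : ℝ) ≤ t := by
        rw [hteq, hty]
        linarith
      -- t is an integer, hence t = -1
      obtain ⟨nt, hnt⟩ := P.coroot_lattice_int hγmem hzQ
      have hnteq : t = (nt : ℝ) := by rw [hteq, hnt]
      have hntm1 : nt = -1 := by
        have h1 : (nt : ℝ) < 0 := by rw [← hnteq]; exact hts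
        have h2' : (-3/2 : ℝ) ≤ (nt : ℝ) := by rw [← hnteq]; exact htlb
        have : nt < 0 := by exact_mod_cast h1
        have : -2 < nt := by
          by_contra hc
          push_neg at hc
          have : (nt : ℝ) ≤ -2 := by exact_mod_cast hc
          linarith
        omega
      have ht1 : t = -1 := by rw [hnteq, hntm1]; norm_num
      -- the gap e_j is a nonneg integer
      have hvQ : v ∈ P.rootLattice := P.weyl_lattice_mem (P.wordProd_mem s') hzQ
      obtain ⟨nx, hnx⟩ := P.coweight_lattice_int hx i
      obtain ⟨nv, hnv⟩ := P.coweight_lattice_int hvQ i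
      have hgap : (0:ℝ) ≤ (nx : ℝ) - nv := by
        rw [← hnx, ← hnv]
        have := IH i
        linarith
      have hgapint : 0 ≤ nx - nv := by
        have : (0:ℝ) ≤ ((nx - nv : ℤ) : ℝ) := by push_cast; linarith
        exact_mod_cast this
      rcases eq_or_lt_of_le hgapint with heq | hlt
      · -- e_j = 0 : contradiction with dominance of x
        exfalso
        have hcoord : P.coweight i x = P.coweight i v := by
          rw [hnx, hnv]
          have : nx = nv := by omega
          exact_mod_cast this
        have hxv : P.coroot (P.sroot i) (x - v)
            = ∑ k, (P.coweight k x - P.coweight k v) * P.coroot (P.sroot i) (P.sroot k) := by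
          conv_lhs => rw [show x - v = ∑ k, P.coweight k (x - v) • P.sroot k from (P.coords _).symm]
          rw [map_sum]
          congr 1; ext k
          rw [map_smul, map_sub]
          simp [smul_eq_mul]
        have hub : P.coroot (P.sroot i) (x - v) ≤ 0 := by
          rw [hxv]
          apply Finset.sum_nonpos
          intro k _
          by_cases hk : k = i
          · subst hk
            rw [hcoord]
            simp
          · apply mul_nonpos_of_nonneg_of_nonpos
            · have := IH k; linarith
            · exact P.cartan_nonpos hk
        have hlb : (1:ℝ) ≤ P.coroot (P.sroot i) (x - v) := by
          rw [map_sub]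
          have hx0 := hxdom i
          rw [← htdef] at *
          linarith [ht1, hx0]
        linarith
      · -- e_j ≥ 1
        have : (1:ℝ) ≤ (nx:ℝ) - nv := by
          have : (1:ℤ) ≤ nx - nv := hlt
          exact_mod_cast this
        rw [← hnx, ← hnv] at this
        rw [ht1]
        linarith

end Main

/-- The sum of the positive roots. -/
noncomputable def rho : V :=
  (P.finite.subset (Set.sep_subset P.isRoot P.IsPos)).toFinset.sum id

lemma mem_posFinset {a : V} :
    a ∈ (P.finite.subset (Set.sep_subset P.isRoot P.IsPos)).toFinset ↔
      a ∈ P.isRoot ∧ P.IsPos a := by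
  rw [Set.Finite.mem_toFinset]
  exact Set.mem_sep_iff

lemma coroot_rho (i : ι) : P.coroot (P.sroot i) P.rho = 2 := by
  classical
  set S := (P.finite.subset (Set.sep_subset P.isRoot P.IsPos)).toFinset with hS
  have hmemi : P.sroot i ∈ S := P.mem_posFinset.mpr ⟨P.sroot_mem i, P.sroot_isPos i⟩
  -- s_i maps S ∖ {α_i} to itself
  have hinv : ∀ a, P.sref i (P.sref i a) = a :=
    Module.involutive_reflection (P.coroot_self (P.sroot i) (P.sroot_mem i))
  have hmaps : ∀ a ∈ S.erase (P.sroot i), P.sref i a ∈ S.erase (P.sroot i) := by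
    intro a ha
    obtain ⟨hne, hmem⟩ := Finset.mem_erase.mp ha
    obtain ⟨hroot, hpos⟩ := P.mem_posFinset.mp hmem
    obtain ⟨h1', h2', h3'⟩ := P.sref_perm hroot hpos i hne
    exact Finset.mem_erase.mpr ⟨h3', P.mem_posFinset.mpr ⟨h1', h2'⟩⟩
  have hsum : ∑ a ∈ S.erase (P.sroot i), P.sref i a = ∑ a ∈ S.erase (P.sroot i), a := by
    apply Finset.sum_nbij' (fun a => P.sref i a) (fun a => P.sref i a)
    · exact hmaps
    · exact hmaps
    · intro a _; exact hinv a
    · intro a _; exact hinv a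
    · intro a _; rfl
  have hrho : P.rho = P.sroot i + ∑ a ∈ S.erase (P.sroot i), a := by
    rw [rho, ← hS]
    rw [← Finset.sum_erase_add S id hmemi]
    simp [add_comm]
  have hsrefrho : P.sref i P.rho = P.rho - (2:ℝ) • P.sroot i := by
    have hmap : P.sref i P.rho = P.sref i (P.sroot i) + ∑ a ∈ S.erase (P.sroot i), P.sref i a := by
      rw [hrho, map_add, map_sum]
    have hsi : P.sref i (P.sroot i) = -P.sroot i := by
      rw [P.sref_apply, P.coroot_self _ (P.sroot_mem i)]
      module
    rw [hmap, hsi, hsum, hrho]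
    module
  have hformula : P.sref i P.rho = P.rho - P.coroot (P.sroot i) P.rho • P.sroot i :=
    P.sref_apply i P.rho
  have heq : P.coroot (P.sroot i) P.rho • P.sroot i = (2:ℝ) • P.sroot i := by
    have := hformula.symm.trans hsrefrho
    have h2 : P.rho - P.coroot (P.sroot i) P.rho • P.sroot i - (P.rho - (2:ℝ) • P.sroot i)
        = (2:ℝ) • P.sroot i - P.coroot (P.sroot i) P.rho • P.sroot i := by module
    have h3 : (2:ℝ) • P.sroot i - P.coroot (P.sroot i) P.rho • P.sroot i = 0 := by
      rw [← h2, this]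
      module
    have := sub_eq_zero.mp h3
    rw [← this]
  have := congrArg (P.coweight i) heq
  rw [map_smul, map_smul, P.coweight_sroot, if_pos rfl] at this
  simpa using this

/-- `V` is linearly equivalent to `ι → ℝ` via the coordinates. -/
noncomputable def coordEquiv : V ≃ₗ[ℝ] (ι → ℝ) where
  toFun v := fun i => P.coweight i v
  map_add' u v := by ext i; simp
  map_smul' c v := by ext i; simp
  invFun c := ∑ i, c i • P.sroot i
  left_inv v := P.coords v
  right_inv c := by ext j; exact P.coweight_sum c j

lemma orbit_finite (x : V) : (P.orbit x).Finite := by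
  have : P.orbit x = Set.range (fun w : ↥P.weylGroup => (w : V ≃ₗ[ℝ] V) x) := by
    ext v
    constructor
    · rintro ⟨w, hw, rfl⟩; exact ⟨⟨w, hw⟩, rfl⟩
    · rintro ⟨w, rfl⟩; exact ⟨w, w.2, rfl⟩
  rw [this]
  exact Set.finite_range _

end RootSystemData

/-- Let `x ∈ Q(R)` be dominant, fix a simple root `α_{i₀}`, and suppose
`z = y + (1/2)α_{i₀}` lies in `Q(R)`, where (i) `⟨y, α_{i₀}^∨⟩ = 0`, (ii) `y` is dominant,
and (iii) `⟨y, ϖ_i⟩ ≤ ⟨x, ϖ_i⟩` for all `i ∈ I`. Then `z ∈ Conv(O_x)`. -/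
theorem statement1 {ι V : Type*} [Fintype ι] [DecidableEq ι] [AddCommGroup V] [Module ℝ V]
    (P : RootSystemData ι V) (x y z : V) (i₀ : ι)
    (hx : x ∈ P.rootLattice) (hxdom : P.IsDominant x)
    (hz : z = y + (1 / 2 : ℝ) • P.sroot i₀) (hzQ : z ∈ P.rootLattice)
    (h1 : P.coroot (P.sroot i₀) y = 0)
    (h2 : P.IsDominant y)
    (h3 : ∀ i, P.coweight i y ≤ P.coweight i x) :
    z ∈ convexHull ℝ (P.orbit x) := by
  classical
  by_contra hcon
  set e := P.coordEquiv with he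
  have hz' : e z ∉ convexHull ℝ (e '' (P.orbit x)) := by
    have himg := e.toLinearMap.image_convexHull (P.orbit x)
    simp only [LinearEquiv.coe_coe] at himg
    rw [← himg]
    rintro ⟨v, hv, hev⟩
    have hveq : v = z := e.injective hev
    exact hcon (hveq ▸ hv)
  have hfin : (e '' (P.orbit x)).Finite := (P.orbit_finite x).image e
  obtain ⟨f, u, hfu, hub⟩ := geometric_hahn_banach_point_closed
    (convex_convexHull ℝ _) (hfin.isCompact_convexHull (𝕜 := ℝ)).isClosed hz'
  set F : V →ₗ[ℝ] ℝ := -((f : (ι → ℝ) →ₗ[ℝ] ℝ).comp (e : V →ₗ[ℝ] (ι → ℝ))) with hF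
  have hFapp : ∀ v : V, F v = -(f (e v)) := by
    intro v
    simp [hF]
  have hsep : ∀ b ∈ P.orbit x, F b < F z := by
    intro b hb
    have h1 : e b ∈ convexHull ℝ (e '' (P.orbit x)) := subset_convexHull ℝ _ ⟨b, hb, rfl⟩
    have h2 := hub _ h1
    rw [hFapp, hFapp]
    linarith
  have hne : Nonempty ↥P.weylGroup := ⟨1, P.one_mem_weyl⟩
  set ξ := x + P.rho with hξ
  obtain ⟨w₀, hw₀⟩ := Finite.exists_max (fun w : ↥P.weylGroup => F ((w : V ≃ₗ[ℝ] V) ξ))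
  have hgdom : ∀ i, 0 ≤ F ((w₀ : V ≃ₗ[ℝ] V) (P.sroot i)) := by
    intro i
    have hcomp := hw₀ (w₀ * ⟨P.sref i, P.sref_mem i⟩)
    have hco : ((w₀ * ⟨P.sref i, P.sref_mem i⟩ : ↥P.weylGroup) : V ≃ₗ[ℝ] V) ξ
        = (w₀ : V ≃ₗ[ℝ] V) (P.sref i ξ) := rfl
    rw [hco] at hcomp
    have hcr : P.coroot (P.sroot i) ξ = P.coroot (P.sroot i) x + 2 := by
      rw [hξ, map_add, P.coroot_rho]
    have hpos : 0 < P.coroot (P.sroot i) ξ := by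
      have := hxdom i; rw [hcr]; linarith
    have hlin : F ((w₀ : V ≃ₗ[ℝ] V) (P.sref i ξ))
        = F ((w₀ : V ≃ₗ[ℝ] V) ξ)
          - P.coroot (P.sroot i) ξ * F ((w₀ : V ≃ₗ[ℝ] V) (P.sroot i)) := by
      rw [P.sref_apply, map_sub, map_smul, map_sub, map_smul, smul_eq_mul]
    rw [hlin] at hcomp
    nlinarith
  have hkey := P.orbit_coweight_le hx hxdom hz hzQ h2 h3 (w₀⁻¹ : ↥P.weylGroup).2
  have hexp : ∀ v : V, F ((w₀ : V ≃ₗ[ℝ] V) v)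
      = ∑ i, P.coweight i v * F ((w₀ : V ≃ₗ[ℝ] V) (P.sroot i)) := by
    intro v
    conv_lhs => rw [← P.coords v]
    rw [map_sum, map_sum]
    congr 1; ext i
    rw [map_smul, map_smul, smul_eq_mul]
  have hzw : (w₀ : V ≃ₗ[ℝ] V) (((w₀⁻¹ : ↥P.weylGroup) : V ≃ₗ[ℝ] V) z) = z := by
    rw [← P.mulApply, ← Subgroup.coe_mul, mul_inv_cancel]
    simp
  have hFz : F z ≤ F ((w₀ : V ≃ₗ[ℝ] V) x) := by
    calc F z = F ((w₀ : V ≃ₗ[ℝ] V) (((w₀⁻¹ : ↥P.weylGroup) : V ≃ₗ[ℝ] V) z)) := by rw [hzw]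
      _ = ∑ i, P.coweight i (((w₀⁻¹ : ↥P.weylGroup) : V ≃ₗ[ℝ] V) z)
            * F ((w₀ : V ≃ₗ[ℝ] V) (P.sroot i)) := hexp _
      _ ≤ ∑ i, P.coweight i x * F ((w₀ : V ≃ₗ[ℝ] V) (P.sroot i)) :=
          Finset.sum_le_sum (fun i _ => mul_le_mul_of_nonneg_right (hkey i) (hgdom i))
      _ = F ((w₀ : V ≃ₗ[ℝ] V) x) := (hexp x).symm
  have hox : (w₀ : V ≃ₗ[ℝ] V) x ∈ P.orbit x := ⟨w₀, w₀.2, rfl⟩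
  have := hsep _ hox
  linarith
end

section
/- Let x ∈ Q(R) be dominant, fix a simple root α_{i₀}, and suppose z = y + (1/2)α_{i₀} lies in Q(R), where ⟨y, α_{i₀}^∨⟩ = 0, y is dominant, and ⟨y, ϖ_i⟩ ≤ ⟨x, ϖ_i⟩ for all i ∈ I. Then ⟨z, α_{i₀}^∨⟩ = 1, and z fails to be dominant if and only if there exists i₁ ∈ I \ {i₀} with ⟨α_{i₀}, α_{i₁}^∨⟩ < −1 and ⟨z, α_{i₁}^∨⟩ = −1; moreover such an i₁, if it exists, is unique, and ⟨z, α_i^∨⟩ ≥ 0 for all i ∈ I \ {i₁}. -/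
open Module

namespace Statement6Aux

open RootSystemData

variable {ι V : Type*} [Fintype ι] [DecidableEq ι] [AddCommGroup V] [Module ℝ V]
variable (P : RootSystemData ι V)

lemma coweight_sum (k : ι) (c : ι → ℕ) :
    P.coweight k (∑ i, (c i : ℝ) • P.sroot i) = c k := by
  rw [map_sum]
  simp only [map_smul, smul_eq_mul, P.coweight_sroot, mul_ite, mul_one, mul_zero]
  simp

lemma coroot_int (a : V) (ha : a ∈ P.isRoot) {v : V} (hv : v ∈ P.rootLattice) :
    ∃ n : ℤ, P.coroot a v = (n : ℝ) := by
  induction hv using AddSubgroup.closure_induction with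
  | mem b hb => exact P.crystallographic a ha b hb
  | zero => exact ⟨0, by simp⟩
  | add u w _ _ hu hw =>
    obtain ⟨m, hm⟩ := hu; obtain ⟨n, hn⟩ := hw
    exact ⟨m + n, by simp [map_add, hm, hn]⟩
  | neg u _ hu =>
    obtain ⟨m, hm⟩ := hu
    exact ⟨-m, by simp [map_neg, hm]⟩

lemma coroot_nonpos {i j : ι} (hij : i ≠ j) :
    P.coroot (P.sroot i) (P.sroot j) ≤ 0 := by
  set c := P.coroot (P.sroot i) (P.sroot j) with hc
  have hmem : P.sroot j - c • P.sroot i ∈ P.isRoot :=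
    P.reflect_mem (P.sroot i) (P.sroot_mem i) (P.sroot j) (P.sroot_mem j)
  rcases P.base _ hmem with ⟨n, hn⟩ | ⟨n, hn⟩
  · have h1 := congrArg (P.coweight i) hn
    rw [map_sub, map_smul, coweight_sum] at h1
    simp [P.coweight_sroot, hij] at h1
    have hni : (0:ℝ) ≤ (n i : ℝ) := by positivity
    linarith
  · exfalso
    have h1 := congrArg (P.coweight j) hn
    rw [map_sub, map_smul, map_neg, coweight_sum] at h1
    simp [P.coweight_sroot, hij, Ne.symm hij] at h1
    have hnj : (0:ℝ) ≤ (n j : ℝ) := by positivity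
    linarith

lemma sroot_indep {i j : ι} (hij : i ≠ j) (t : ℝ) : P.sroot j ≠ t • P.sroot i := by
  intro h
  have h1 := congrArg (P.coweight j) h
  rw [map_smul, P.coweight_sroot, P.coweight_sroot] at h1
  simp only [if_pos rfl, if_neg (Ne.symm hij)] at h1
  simpa using h1

lemma wg_maps {g : V ≃ₗ[ℝ] V} (hg : g ∈ P.weylGroup) : ∀ a ∈ P.isRoot, g a ∈ P.isRoot := by
  induction hg using Subgroup.closure_induction with
  | mem x hx =>
    obtain ⟨b, hb, rfl⟩ := hx
    intro a ha
    rw [Module.reflection_apply]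
    exact P.reflect_mem b hb a ha
  | one => intro a ha; simpa using ha
  | mul x y _ _ px py =>
    intro a ha
    have : (x * y) a = x (y a) := rfl
    rw [this]
    exact px _ (py a ha)
  | inv x _ px =>
    intro a ha
    have hbij : Set.BijOn x P.isRoot P.isRoot :=
      (P.finite.injOn_iff_bijOn_of_mapsTo px).mp x.injective.injOn
    obtain ⟨b, hb, hba⟩ := hbij.surjOn ha
    have : x⁻¹ a = b := by
      rw [← hba]
      exact x.symm_apply_apply b
    rw [this]; exact hb

lemma wg_finite : Finite P.weylGroup := by
  have : Finite P.isRoot := P.finite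
  have hinj : Function.Injective
      (fun (g : P.weylGroup) (a : P.isRoot) =>
        (⟨g.1 a.1, wg_maps P g.2 a.1 a.2⟩ : P.isRoot)) := by
    intro g h hgh
    have heq : ∀ a ∈ P.isRoot, g.1 a = h.1 a := fun a ha =>
      congrArg Subtype.val (congrFun hgh ⟨a, ha⟩)
    have h2 : g.1.toLinearMap = h.1.toLinearMap := LinearMap.ext_on P.span_top heq
    exact Subtype.ext (LinearEquiv.toLinearMap_injective h2)
  exact Finite.of_injective _ hinj

lemma exists_form : ∃ B : V →ₗ[ℝ] V →ₗ[ℝ] ℝ,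
    (∀ u v : V, B u v = B v u) ∧ (∀ v : V, v ≠ 0 → 0 < B v v) ∧
    (∀ a ∈ P.isRoot, ∀ v : V, P.coroot a v * B a a = 2 * B v a) := by
  have hfd : Module.Finite ℝ V := ⟨⟨P.finite.toFinset, by simpa using P.span_top⟩⟩
  let b := Module.finBasis ℝ V
  let B₀ : V →ₗ[ℝ] V →ₗ[ℝ] ℝ := LinearMap.mk₂ ℝ (fun u w => ∑ i, b.repr u i * b.repr w i)
    (fun u₁ u₂ w => by simp [add_mul, Finset.sum_add_distrib])
    (fun t u w => by simp [Finset.mul_sum, mul_assoc])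
    (fun u w₁ w₂ => by simp [mul_add, Finset.sum_add_distrib])
    (fun t u w => by
      simp only [map_smul, Finsupp.smul_apply, smul_eq_mul, Finset.mul_sum]
      exact Finset.sum_congr rfl fun i _ => by ring)
  have hB₀pos : ∀ v : V, v ≠ 0 → 0 < B₀ v v := by
    intro v hv
    have hrepr : b.repr v ≠ 0 := by
      simpa using (b.repr.map_ne_zero_iff).mpr hv
    obtain ⟨i, hi⟩ := DFunLike.ne_iff.mp hrepr
    have : (0:ℝ) < b.repr v i * b.repr v i := mul_self_pos.mpr (by simpa using hi)
    refine Finset.sum_pos' (fun j _ => mul_self_nonneg _) ⟨i, Finset.mem_univ i, this⟩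
  haveI : Finite P.weylGroup := wg_finite P
  haveI : Fintype P.weylGroup := Fintype.ofFinite _
  refine ⟨LinearMap.mk₂ ℝ (fun u w => ∑ g : P.weylGroup, B₀ (g.1 u) (g.1 w))
    (fun u₁ u₂ w => by simp [Finset.sum_add_distrib])
    (fun t u w => by simp [Finset.mul_sum])
    (fun u w₁ w₂ => by simp [Finset.sum_add_distrib])
    (fun t u w => by simp [Finset.mul_sum]), ?_, ?_, ?_⟩
  · intro u v
    simp only [LinearMap.mk₂_apply]
    refine Finset.sum_congr rfl fun g _ => ?_
    simp only [LinearMap.mk₂_apply, B₀]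
    exact Finset.sum_congr rfl fun i _ => mul_comm _ _
  · intro v hv
    simp only [LinearMap.mk₂_apply]
    refine Finset.sum_pos' (fun g _ => ?_) ⟨1, Finset.mem_univ 1, ?_⟩
    · simp only [LinearMap.mk₂_apply, B₀]
      exact Finset.sum_nonneg fun i _ => mul_self_nonneg _
    · have h1 : ((1 : P.weylGroup) : V ≃ₗ[ℝ] V) v = v := rfl
      simpa [h1] using hB₀pos v hv
  · intro a ha v
    set r : V ≃ₗ[ℝ] V := Module.reflection (P.coroot_self a ha) with hr
    have hrmem : r ∈ P.weylGroup := Subgroup.subset_closure ⟨a, ha, rfl⟩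
    set B : V →ₗ[ℝ] V →ₗ[ℝ] ℝ := LinearMap.mk₂ ℝ
      (fun u w => ∑ g : P.weylGroup, B₀ (g.1 u) (g.1 w))
      (fun u₁ u₂ w => by simp [Finset.sum_add_distrib])
      (fun t u w => by simp [Finset.mul_sum])
      (fun u w₁ w₂ => by simp [Finset.sum_add_distrib])
      (fun t u w => by simp [Finset.mul_sum]) with hBdef
    show P.coroot a v * B a a = 2 * B v a
    have hinv : ∀ u w : V, B (r u) (r w) = B u w := by
      intro u w
      have step : ∀ g : P.weylGroup, B₀ (g.1 (r u)) (g.1 (r w)) =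
          B₀ ((g * ⟨r, hrmem⟩).1 u) ((g * ⟨r, hrmem⟩).1 w) := fun g => rfl
      calc B (r u) (r w) = ∑ g : P.weylGroup, B₀ ((g * ⟨r, hrmem⟩).1 u) ((g * ⟨r, hrmem⟩).1 w) :=
            Finset.sum_congr rfl fun g _ => step g
        _ = ∑ g : P.weylGroup, B₀ (g.1 u) (g.1 w) :=
            Fintype.sum_bijective (· * (⟨r, hrmem⟩ : P.weylGroup))
              (Group.mulRight_bijective _) _ _ (fun g => rfl)
        _ = B u w := rfl
    have h := hinv v a
    rw [Module.reflection_apply, Module.reflection_apply_self] at h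
    simp only [map_sub, map_smul, map_neg, LinearMap.sub_apply, LinearMap.smul_apply,
      LinearMap.neg_apply, smul_eq_mul] at h
    linarith

lemma cs {B : V →ₗ[ℝ] V →ₗ[ℝ] ℝ} (hsym : ∀ u v : V, B u v = B v u)
    (hpos : ∀ v : V, v ≠ 0 → 0 < B v v) {a v : V} (ha : a ≠ 0)
    (hind : ∀ t : ℝ, v ≠ t • a) : (B v a) ^ 2 < B a a * B v v := by
  have haa : 0 < B a a := hpos a ha
  set w := B a a • v - B v a • a with hw
  have hwne : w ≠ 0 := by
    intro h
    have h' : B a a • v = B v a • a := by rwa [sub_eq_zero] at h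
    have hv : v = ((B a a)⁻¹ * B v a) • a := by
      rw [mul_smul, ← h', inv_smul_smul₀ (ne_of_gt haa)]
    exact hind _ hv
  have h0 := hpos w hwne
  have hav : B a v = B v a := hsym a v
  have hexp : B w w = B a a * (B a a * B v v - (B v a) ^ 2) := by
    simp only [hw, map_sub, map_smul, LinearMap.sub_apply, LinearMap.smul_apply, smul_eq_mul]
    rw [hav]
    ring
  nlinarith [hexp, h0, haa]

lemma neg_three_le {i j : ι} (hij : i ≠ j) : -3 ≤ P.coroot (P.sroot i) (P.sroot j) := by
  obtain ⟨B, hsym, hpos, hkey⟩ := exists_form P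
  set c := P.coroot (P.sroot i) (P.sroot j) with hcdef
  set d := P.coroot (P.sroot j) (P.sroot i) with hddef
  by_cases hc : c ≤ -2
  swap
  · push_neg at hc; linarith
  have hBii : 0 < B (P.sroot i) (P.sroot i) := hpos _ (P.ne_zero _ (P.sroot_mem i))
  have hBjj : 0 < B (P.sroot j) (P.sroot j) := hpos _ (P.ne_zero _ (P.sroot_mem j))
  have hci : c * B (P.sroot i) (P.sroot i) = 2 * B (P.sroot j) (P.sroot i) :=
    hkey (P.sroot i) (P.sroot_mem i) (P.sroot j)
  have hd : d * B (P.sroot j) (P.sroot j) = 2 * B (P.sroot i) (P.sroot j) :=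
    hkey (P.sroot j) (P.sroot_mem j) (P.sroot i)
  have hsymij : B (P.sroot i) (P.sroot j) = B (P.sroot j) (P.sroot i) := hsym _ _
  have hBji_neg : B (P.sroot j) (P.sroot i) < 0 := by nlinarith
  have hdneg : d < 0 := by nlinarith
  obtain ⟨m, hm⟩ := P.crystallographic _ (P.sroot_mem j) _ (P.sroot_mem i)
  rw [← hddef] at hm
  have hd1 : d ≤ -1 := by
    have hm0 : m < 0 := by exact_mod_cast hm ▸ hdneg
    rw [hm]; exact_mod_cast (by omega : m ≤ -1)
  have hcs : (B (P.sroot j) (P.sroot i)) ^ 2 <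
      B (P.sroot i) (P.sroot i) * B (P.sroot j) (P.sroot j) :=
    cs hsym hpos (P.ne_zero _ (P.sroot_mem i)) (sroot_indep P hij)
  have hmul : (c * B (P.sroot i) (P.sroot i)) * (d * B (P.sroot j) (P.sroot j)) =
      (2 * B (P.sroot j) (P.sroot i)) * (2 * B (P.sroot i) (P.sroot j)) := by
    rw [hci, hd]
  rw [hsymij] at hmul
  have hprod : c * d < 4 := by nlinarith [mul_pos hBii hBjj]
  obtain ⟨mc, hmc⟩ := P.crystallographic _ (P.sroot_mem i) _ (P.sroot_mem j)
  rw [← hcdef] at hmc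
  have hcdcast : c * d = ((mc * m : ℤ) : ℝ) := by rw [hmc, hm]; push_cast; ring
  have hint4 : (mc * m : ℤ) < 4 := by exact_mod_cast hcdcast ▸ hprod
  have hint3 : (mc * m : ℤ) ≤ 3 := by omega
  have hcd3 : c * d ≤ 3 := by
    rw [hcdcast]; exact_mod_cast hint3
  nlinarith [mul_nonneg (show (0:ℝ) ≤ -c by linarith) (show (0:ℝ) ≤ -d - 1 by linarith)]

lemma not_two_heavy {i j k : ι} (hji : j ≠ i) (hki : k ≠ i) (hjk : j ≠ k)
    (hcj : P.coroot (P.sroot j) (P.sroot i) ≤ -2)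
    (hck : P.coroot (P.sroot k) (P.sroot i) ≤ -2) : False := by
  obtain ⟨B, hsym, hpos, hkey⟩ := exists_form P
  set ai := P.sroot i; set aj := P.sroot j; set ak := P.sroot k
  have hBii : 0 < B ai ai := hpos _ (P.ne_zero _ (P.sroot_mem i))
  have hBjj : 0 < B aj aj := hpos _ (P.ne_zero _ (P.sroot_mem j))
  have hBkk : 0 < B ak ak := hpos _ (P.ne_zero _ (P.sroot_mem k))
  -- j bounds
  have h1j : P.coroot aj ai * B aj aj = 2 * B ai aj := hkey aj (P.sroot_mem j) ai
  have hij1 : B ai aj ≤ - B aj aj := by nlinarith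
  have h2j : P.coroot ai aj * B ai ai = 2 * B aj ai := hkey ai (P.sroot_mem i) aj
  have hsymj : B aj ai = B ai aj := hsym _ _
  have hdjneg : P.coroot ai aj < 0 := by nlinarith
  obtain ⟨mj, hmj⟩ := P.crystallographic _ (P.sroot_mem i) _ (P.sroot_mem j)
  have hdj1 : P.coroot ai aj ≤ -1 := by
    have : mj < 0 := by rw [hmj] at hdjneg; exact_mod_cast hdjneg
    have h' : mj ≤ -1 := by omega
    rw [hmj]; exact_mod_cast h'
  have hij2 : B ai aj ≤ - B ai ai / 2 := by nlinarith
  -- k bounds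
  have h1k : P.coroot ak ai * B ak ak = 2 * B ai ak := hkey ak (P.sroot_mem k) ai
  have hik1 : B ai ak ≤ - B ak ak := by nlinarith
  have h2k : P.coroot ai ak * B ai ai = 2 * B ak ai := hkey ai (P.sroot_mem i) ak
  have hsymk : B ak ai = B ai ak := hsym _ _
  have hdkneg : P.coroot ai ak < 0 := by nlinarith
  obtain ⟨mk, hmk⟩ := P.crystallographic _ (P.sroot_mem i) _ (P.sroot_mem k)
  have hdk1 : P.coroot ai ak ≤ -1 := by
    have : mk < 0 := by rw [hmk] at hdkneg; exact_mod_cast hdkneg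
    have h' : mk ≤ -1 := by omega
    rw [hmk]; exact_mod_cast h'
  have hik2 : B ai ak ≤ - B ai ai / 2 := by nlinarith
  -- jk bound
  have hejk : P.coroot aj ak ≤ 0 := coroot_nonpos P hjk
  have h3 : P.coroot aj ak * B aj aj = 2 * B ak aj := hkey aj (P.sroot_mem j) ak
  have hsymjk : B ak aj = B aj ak := hsym _ _
  have hjk0 : B aj ak ≤ 0 := by nlinarith
  -- the vector ξ
  have hξ : ai + aj + ak ≠ 0 := by
    intro h
    have h' := congrArg (P.coweight j) h
    simp [ai, aj, ak, P.coweight_sroot, hji, hjk] at h'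
  have h0 := hpos _ hξ
  have hexp : B (ai + aj + ak) (ai + aj + ak) =
      B ai ai + B aj aj + B ak ak + 2 * B ai aj + 2 * B ai ak + 2 * B aj ak := by
    simp only [map_add, LinearMap.add_apply]
    rw [hsym aj ai, hsym ak ai, hsym ak aj]
    ring
  linarith [hexp, h0, hij1, hij2, hik1, hik2, hjk0, hBii, hBjj, hBkk]

end Statement6Aux

/-- With `x, y, z, i₀` as in Lemma 1.1: `⟨z, α_{i₀}^∨⟩ = 1`, and `z` fails
to be dominant iff there exists `i₁ ∈ I \ {i₀}` with `⟨α_{i₀}, α_{i₁}^∨⟩ < −1` and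
`⟨z, α_{i₁}^∨⟩ = −1`; such an `i₁`, if it exists, is unique, and `⟨z, α_i^∨⟩ ≥ 0` for all
`i ∈ I \ {i₁}`. -/
theorem statement6 {ι V : Type*} [Fintype ι] [DecidableEq ι] [AddCommGroup V] [Module ℝ V]
    (P : RootSystemData ι V) (x y z : V) (i₀ : ι)
    (hx : x ∈ P.rootLattice) (hxdom : P.IsDominant x)
    (hz : z = y + (1 / 2 : ℝ) • P.sroot i₀) (hzQ : z ∈ P.rootLattice)
    (h1 : P.coroot (P.sroot i₀) y = 0)
    (h2 : P.IsDominant y)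
    (h3 : ∀ i, P.coweight i y ≤ P.coweight i x) :
    P.coroot (P.sroot i₀) z = 1 ∧
    (¬ P.IsDominant z ↔ ∃ i₁, i₁ ≠ i₀ ∧
      P.coroot (P.sroot i₁) (P.sroot i₀) < -1 ∧ P.coroot (P.sroot i₁) z = -1) ∧
    (∀ i₁ i₁', (i₁ ≠ i₀ ∧ P.coroot (P.sroot i₁) (P.sroot i₀) < -1 ∧
        P.coroot (P.sroot i₁) z = -1) →
      (i₁' ≠ i₀ ∧ P.coroot (P.sroot i₁') (P.sroot i₀) < -1 ∧
        P.coroot (P.sroot i₁') z = -1) → i₁ = i₁') ∧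
    (∀ i₁, (i₁ ≠ i₀ ∧ P.coroot (P.sroot i₁) (P.sroot i₀) < -1 ∧
        P.coroot (P.sroot i₁) z = -1) →
      ∀ i, i ≠ i₁ → 0 ≤ P.coroot (P.sroot i) z) := by
  have hz0 : P.coroot (P.sroot i₀) z = 1 := by
    rw [hz, map_add, map_smul, h1, P.coroot_self _ (P.sroot_mem i₀)]
    norm_num
  have hzi : ∀ i, P.coroot (P.sroot i) z =
      P.coroot (P.sroot i) y + (1/2) * P.coroot (P.sroot i) (P.sroot i₀) := by
    intro i
    rw [hz, map_add, map_smul]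
    simp [smul_eq_mul]
  have hint : ∀ i, ∃ n : ℤ, P.coroot (P.sroot i) z = (n : ℝ) := fun i =>
    Statement6Aux.coroot_int P _ (P.sroot_mem i) hzQ
  have hle2 : ∀ i, i ≠ i₀ → P.coroot (P.sroot i) (P.sroot i₀) < -1 →
      P.coroot (P.sroot i) (P.sroot i₀) ≤ -2 := by
    intro i _ hlt
    obtain ⟨m, hm⟩ := P.crystallographic _ (P.sroot_mem i) _ (P.sroot_mem i₀)
    rw [hm] at hlt ⊢
    have : m < -1 := by exact_mod_cast hlt
    exact_mod_cast (by omega : m ≤ -2)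
  have hneg : ∀ i, P.coroot (P.sroot i) z < 0 →
      i ≠ i₀ ∧ P.coroot (P.sroot i) (P.sroot i₀) < -1 ∧ P.coroot (P.sroot i) z = -1 := by
    intro i hi
    have hne : i ≠ i₀ := by
      rintro rfl
      rw [hz0] at hi; linarith
    have hyi := h2 i
    have hc3 := Statement6Aux.neg_three_le P hne
    obtain ⟨n, hn⟩ := hint i
    have hn0 : n < 0 := by exact_mod_cast hn ▸ hi
    have hzile : P.coroot (P.sroot i) z ≤ -1 := by
      rw [hn]; exact_mod_cast (by omega : n ≤ -1)
    have hc : P.coroot (P.sroot i) (P.sroot i₀) ≤ -2 := by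
      have := hzi i; linarith
    refine ⟨hne, by linarith, ?_⟩
    have hgt : (-2:ℝ) < P.coroot (P.sroot i) z := by
      rw [hzi i]; linarith
    have hn2 : (-2:ℤ) < n := by exact_mod_cast hn ▸ hgt
    have : n = -1 := by omega
    rw [hn, this]; norm_num
  refine ⟨hz0, ?_, ?_, ?_⟩
  · constructor
    · intro hnd
      have hex : ∃ i, P.coroot (P.sroot i) z < 0 := by
        by_contra hcon
        push_neg at hcon
        exact hnd fun i => hcon i
      obtain ⟨i, hi⟩ := hex
      exact ⟨i, hneg i hi⟩
    · rintro ⟨i₁, -, -, hm1⟩ hdom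
      have := hdom i₁
      rw [hm1] at this; linarith
  · rintro i₁ i₁' ⟨h1a, h1b, h1c⟩ ⟨h2a, h2b, h2c⟩
    by_contra hne
    exact Statement6Aux.not_two_heavy P h1a h2a hne (hle2 _ h1a h1b) (hle2 _ h2a h2b)
  · rintro i₁ ⟨h1a, h1b, h1c⟩ i hii₁
    by_contra hlt
    push_neg at hlt
    obtain ⟨hne0, hb', _⟩ := hneg i hlt
    exact Statement6Aux.not_two_heavy P hne0 h1a hii₁ (hle2 _ hne0 hb') (hle2 _ h1a h1b)
end

section
/- Let x ∈ Q(R) be dominant, fix a simple root α_{i₀}, and suppose z = y + (1/2)α_{i₀} lies in Q(R), where ⟨y, α_{i₀}^∨⟩ = 0, y is dominant, and ⟨y, ϖ_i⟩ ≤ ⟨x, ϖ_i⟩ for all i ∈ I. Suppose z is not dominant, with (unique) witness i₁ ∈ I \ {i₀} satisfying ⟨α_{i₀}, α_{i₁}^∨⟩ < −1 and ⟨z, α_{i₁}^∨⟩ = −1. Then z₁ := s_{α_{i₁}}(z) equals z + α_{i₁}, one has ⟨z₁, α_i^∨⟩ ≥ 0 for i = i₀ and i = i₁, and z₁ fails to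 be dominant if and only if there exists i₂ ∈ I \ {i₀, i₁} with ⟨α_{i₁}, α_{i₂}^∨⟩ = −1 and ⟨z, α_{i₂}^∨⟩ = 0; such an i₂, if it exists, is unique, and ⟨z₁, α_i^∨⟩ ≥ 0 for all i ∈ I \ {i₂}. -/
open Module

section Aux

variable {ι V : Type*} [Fintype ι] [DecidableEq ι] [AddCommGroup V] [Module ℝ V]
variable (P : RootSystemData ι V)

lemma aux_int_dichot {x : ℝ} (h : ∃ n : ℤ, x = n) : 0 ≤ x ∨ x ≤ -1 := by
  obtain ⟨n, rfl⟩ := h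
  rcases le_or_gt 0 n with h | h
  · left; exact_mod_cast h
  · right; exact_mod_cast (by omega : n ≤ -1)

lemma aux_cw_sum (m : ι → ℝ) (j : ι) :
    P.coweight j (∑ k, m k • P.sroot k) = m j := by
  rw [map_sum]
  simp only [map_smul, P.coweight_sroot, smul_eq_mul, mul_ite, mul_one, mul_zero]
  rw [Finset.sum_ite_eq]
  simp

lemma aux_sum_delta (c : ℝ) (k : ι) (f : ι → ℝ) :
    ∑ j, (if j = k then c else 0) * f j = c * f k := by
  rw [Finset.sum_eq_single k]
  · simp
  · intro b _ hb; simp [hb]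
  · intro h; simp at h

/-- Engine 0: an asymmetric-zero pairing between two roots is impossible. -/
lemma aux_engine0 (u v : V) (hu : u ∈ P.isRoot) (hv : v ∈ P.isRoot)
    (h0 : P.coroot v u = 0) (hB : P.coroot u v ≠ 0) : False := by
  set B := P.coroot u v with hBdef
  have key : ∀ n : ℕ, v + ((2 * (n : ℝ)) * B) • u ∈ P.isRoot := by
    intro n
    induction n with
    | zero => simpa using hv
    | succ n ih =>
      set c : ℝ := (2 * (n : ℝ)) * B with hc
      have h1 : P.coroot u (v + c • u) = B + 2 * c := by
        simp [map_add, map_smul, P.coroot_self u hu, ← hBdef]; ring_nf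
      have t1 : v + (-(B + c)) • u ∈ P.isRoot := by
        have h := P.reflect_mem u hu _ ih
        rw [h1] at h
        convert h using 1
        module
      have h2 : P.coroot v (v + (-(B + c)) • u) = 2 := by
        simp [map_add, map_smul, P.coroot_self v hv, h0]
      have t2 : -v + (-(B + c)) • u ∈ P.isRoot := by
        have h := P.reflect_mem v hv _ t1
        rw [h2] at h
        convert h using 1
        module
      have h3 : P.coroot u (-v + (-(B + c)) • u) = -B + 2 * (-(B + c)) := by
        simp [map_add, map_smul, map_neg, P.coroot_self u hu, ← hBdef]; ring_nf
      have t3 : -v + (2 * B + c) • u ∈ P.isRoot := by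
        have h := P.reflect_mem u hu _ t2
        rw [h3] at h
        convert h using 1
        module
      have h4 : P.coroot v (-v + (2 * B + c) • u) = -2 := by
        simp [map_add, map_smul, map_neg, P.coroot_self v hv, h0]
      have t4 : v + (2 * B + c) • u ∈ P.isRoot := by
        have h := P.reflect_mem v hv _ t3
        rw [h4] at h
        convert h using 1
        module
      convert t4 using 2
      push_cast
      rw [hc]
      module
  have hinj : Function.Injective (fun n : ℕ => v + ((2 * (n : ℝ)) * B) • u) := by
    intro n m hnm
    simp only [add_right_inj] at hnm
    have h := sub_eq_zero.mpr hnm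
    rw [← sub_smul] at h
    rcases smul_eq_zero.mp h with h | h
    · have h2 : ((n : ℝ) - m) * (2 * B) = 0 := by linear_combination h
      rcases mul_eq_zero.mp h2 with h3 | h3
      · have : (n : ℝ) = m := by linarith
        exact_mod_cast this
      · exact absurd (by linarith : B = 0) hB
    · exact absurd h (P.ne_zero u hu)
  exact (Set.infinite_of_injective_forall_mem hinj key) P.finite

/-- Off-diagonal Cartan numbers are nonpositive. -/
lemma aux_offdiag_nonpos (i j : ι) (hij : i ≠ j) :
    P.coroot (P.sroot i) (P.sroot j) ≤ 0 := by
  by_contra hpos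
  push_neg at hpos
  set c := P.coroot (P.sroot i) (P.sroot j) with hcdef
  have hβ : P.sroot j - c • P.sroot i ∈ P.isRoot :=
    P.reflect_mem _ (P.sroot_mem i) _ (P.sroot_mem j)
  rcases P.base _ hβ with ⟨m, hm⟩ | ⟨m, hm⟩
  · have h1 : P.coweight i (P.sroot j - c • P.sroot i) = -c := by
      simp [map_sub, map_smul, P.coweight_sroot, hij]
    rw [hm, aux_cw_sum] at h1
    have : (0 : ℝ) ≤ m i := Nat.cast_nonneg _
    linarith
  · have h1 : P.coweight j (P.sroot j - c • P.sroot i) = 1 := by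
      simp [map_sub, map_smul, P.coweight_sroot, (Ne.symm hij)]
    rw [hm, map_neg, aux_cw_sum] at h1
    have : (0 : ℝ) ≤ m j := Nat.cast_nonneg _
    linarith

/-- If the Cartan pairing is nonzero one way, the reverse is at most `-1`. -/
lemma aux_offdiag_neg (i j : ι) (hij : i ≠ j)
    (h : P.coroot (P.sroot i) (P.sroot j) ≠ 0) :
    P.coroot (P.sroot j) (P.sroot i) ≤ -1 := by
  have h0 : P.coroot (P.sroot j) (P.sroot i) ≠ 0 := by
    intro h0
    exact aux_engine0 P (P.sroot i) (P.sroot j) (P.sroot_mem i) (P.sroot_mem j) h0 h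
  have hle := aux_offdiag_nonpos P j i (Ne.symm hij)
  obtain ⟨n, hn⟩ := P.crystallographic _ (P.sroot_mem j) _ (P.sroot_mem i)
  rw [hn] at hle h0 ⊢
  have hn0 : n ≠ 0 := by exact_mod_cast h0
  have : n ≤ -1 := by
    have : n ≤ 0 := by exact_mod_cast hle
    omega
  exact_mod_cast this

end Aux
section Main

variable {ι V : Type*} [Fintype ι] [DecidableEq ι] [AddCommGroup V] [Module ℝ V]
variable (P : RootSystemData ι V)

/-- If there is a nonnegative weight vector `w`, nonzero somewhere, such that for every `k`
in the support of `w` the weighted column sum of Cartan pairings is nonpositive,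
then the root system would be infinite: contradiction. -/
lemma aux_no_affine (w : ι → ℝ) (hw : ∀ j, 0 ≤ w j) (k₀ : ι) (hk₀ : w k₀ ≠ 0)
    (hcol : ∀ k, w k ≠ 0 → ∑ j, w j * P.coroot (P.sroot j) (P.sroot k) ≤ 0) : False := by
  have key : ∀ n : ℕ, ∃ r ∈ P.isRoot,
      (∀ k, w k = 0 → P.coweight k r = 0) ∧ (n : ℝ) < ∑ k, P.coweight k r := by
    intro n
    induction n with
    | zero =>
      refine ⟨P.sroot k₀, P.sroot_mem k₀, ?_, ?_⟩
      · intro k hk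
        rw [P.coweight_sroot]
        have : k ≠ k₀ := fun h => hk₀ (h ▸ hk)
        simp [this]
      · have : ∑ k, P.coweight k (P.sroot k₀) = 1 := by
          simp only [P.coweight_sroot]
          rw [Finset.sum_ite_eq']
          simp
        rw [this]
        norm_num
    | succ n ih =>
      obtain ⟨r, hrR, hsupp, hψ⟩ := ih
      -- r is a positive combination of simple roots
      obtain ⟨m, hm⟩ | ⟨m, hm⟩ := P.base r hrR
      swap
      · exfalso
        have : ∑ k, P.coweight k r = -∑ k, (m k : ℝ) := by
          rw [hm]
          simp only [map_neg, aux_cw_sum]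
          rw [Finset.sum_neg_distrib]
        have hnn : (0:ℝ) ≤ ∑ k, (m k : ℝ) := Finset.sum_nonneg fun k _ => Nat.cast_nonneg _
        have hn0 : (0:ℝ) ≤ (n:ℝ) := Nat.cast_nonneg _
        rw [this] at hψ
        linarith
      have hcw : ∀ k, P.coweight k r = m k := by
        intro k; rw [hm, aux_cw_sum]
      -- find a simple root pairing ≤ -1 in the support of w
      have hj : ∃ j, w j ≠ 0 ∧ P.coroot (P.sroot j) r ≤ -1 := by
        by_contra hcon
        push_neg at hcon
        have hge : ∀ j, w j ≠ 0 → 0 ≤ P.coroot (P.sroot j) r := by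
          intro j hjw
          rcases aux_int_dichot (P.crystallographic _ (P.sroot_mem j) r hrR) with h | h
          · exact h
          · exact absurd h (by linarith [hcon j hjw])
        have hterm : ∀ j, 0 ≤ w j * P.coroot (P.sroot j) r := by
          intro j
          rcases eq_or_ne (w j) 0 with h | h
          · simp [h]
          · exact mul_nonneg (hw j) (hge j h)
        have hφ1 : 0 ≤ ∑ j, w j * P.coroot (P.sroot j) r :=
          Finset.sum_nonneg fun j _ => hterm j
        have hφ2 : ∑ j, w j * P.coroot (P.sroot j) r ≤ 0 := by
          have hrw : ∀ j, w j * P.coroot (P.sroot j) r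
              = ∑ k, (m k : ℝ) * (w j * P.coroot (P.sroot j) (P.sroot k)) := by
            intro j
            rw [hm, map_sum]
            rw [Finset.mul_sum]
            congr 1
            ext k
            rw [map_smul]
            simp [smul_eq_mul]
            ring
          calc ∑ j, w j * P.coroot (P.sroot j) r
              = ∑ j, ∑ k, (m k : ℝ) * (w j * P.coroot (P.sroot j) (P.sroot k)) := by
                exact Finset.sum_congr rfl fun j _ => hrw j
            _ = ∑ k, (m k : ℝ) * ∑ j, w j * P.coroot (P.sroot j) (P.sroot k) := by
                rw [Finset.sum_comm]
                exact Finset.sum_congr rfl fun k _ => by rw [Finset.mul_sum]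
            _ ≤ 0 := by
                apply Finset.sum_nonpos
                intro k _
                rcases eq_or_ne (w k) 0 with h | h
                · have : (m k : ℝ) = 0 := by rw [← hcw k]; exact hsupp k h
                  simp [this]
                · exact mul_nonpos_of_nonneg_of_nonpos (Nat.cast_nonneg _) (hcol k h)
        have heq : ∑ j, w j * P.coroot (P.sroot j) r = 0 := le_antisymm hφ2 hφ1
        have hz : ∀ j, w j ≠ 0 → P.coroot (P.sroot j) r = 0 := by
          intro j hjw
          have := (Finset.sum_eq_zero_iff_of_nonneg fun j _ => hterm j).mp heq j (Finset.mem_univ j)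
          rcases mul_eq_zero.mp this with h | h
          · exact absurd h hjw
          · exact h
        -- self-pairing is 2
        have hself : ∑ k, (m k : ℝ) * P.coroot r (P.sroot k) = 2 := by
          have hs : P.coroot r r = P.coroot r (∑ k, (m k : ℝ) • P.sroot k) := by
            rw [← hm]
          rw [P.coroot_self r hrR, map_sum] at hs
          simp only [map_smul, smul_eq_mul] at hs
          exact hs.symm
        have hex : ∃ k, (m k : ℝ) ≠ 0 ∧ P.coroot r (P.sroot k) ≠ 0 := by
          by_contra hno
          push_neg at hno
          have : ∑ k, (m k : ℝ) * P.coroot r (P.sroot k) = 0 := by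
            apply Finset.sum_eq_zero
            intro k _
            rcases eq_or_ne ((m k : ℝ)) 0 with h | h
            · simp [h]
            · rw [hno k h]; ring
          rw [this] at hself
          norm_num at hself
        obtain ⟨k, hmk, hk⟩ := hex
        have hwk : w k ≠ 0 := by
          intro h
          exact hmk (by rw [← hcw k]; exact hsupp k h)
        exact aux_engine0 P r (P.sroot k) hrR (P.sroot_mem k) (hz k hwk) hk
      obtain ⟨j, hwj, hcj⟩ := hj
      refine ⟨r - P.coroot (P.sroot j) r • P.sroot j,
        P.reflect_mem _ (P.sroot_mem j) r hrR, ?_, ?_⟩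
      · intro k hk
        have hkj : k ≠ j := fun h => hwj (h ▸ hk)
        rw [map_sub, map_smul, P.coweight_sroot]
        simp [hkj, hsupp k hk]
      · have hsum : ∑ k, P.coweight k (r - P.coroot (P.sroot j) r • P.sroot j)
            = (∑ k, P.coweight k r) - P.coroot (P.sroot j) r := by
          simp only [map_sub, map_smul, smul_eq_mul, P.coweight_sroot, mul_ite, mul_one, mul_zero]
          rw [Finset.sum_sub_distrib, Finset.sum_ite_eq']
          simp
        rw [hsum]
        push_cast
        linarith
  obtain ⟨M, hM⟩ := (P.finite.image (fun r => ∑ k, P.coweight k r)).bddAbove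
  obtain ⟨r, hrR, -, hψ⟩ := key ⌈M⌉₊
  have h1 : ∑ k, P.coweight k r ≤ M := hM (Set.mem_image_of_mem _ hrR)
  have h2 : M ≤ (⌈M⌉₊ : ℝ) := Nat.le_ceil M
  linarith

end Main
section Latt

variable {ι V : Type*} [Fintype ι] [DecidableEq ι] [AddCommGroup V] [Module ℝ V]
variable (P : RootSystemData ι V)

lemma aux_lattice_int (i : ι) (v : V) (hv : v ∈ P.rootLattice) :
    ∃ n : ℤ, P.coroot (P.sroot i) v = n := by
  let S : AddSubgroup V := AddSubgroup.comap (P.coroot (P.sroot i)).toAddMonoidHom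
    (AddSubgroup.zmultiples (1 : ℝ))
  have hle : P.rootLattice ≤ S := by
    apply (AddSubgroup.closure_le S).mpr
    intro a ha
    obtain ⟨n, hn⟩ := P.crystallographic _ (P.sroot_mem i) a ha
    refine ⟨n, ?_⟩
    simp [hn]
  have := hle hv
  obtain ⟨n, hn⟩ := this
  refine ⟨n, ?_⟩
  simpa using hn.symm

end Latt

/-- With `x, y, z, i₀` as in Lemma 1.1, suppose `z` is not dominant, with
(unique) witness `i₁ ∈ I \ {i₀}` satisfying `⟨α_{i₀}, α_{i₁}^∨⟩ < −1` and
`⟨z, α_{i₁}^∨⟩ = −1`. Then `z₁ := s_{α_{i₁}}(z)` equals `z + α_{i₁}`, one has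
`⟨z₁, α_i^∨⟩ ≥ 0` for `i = i₀` and `i = i₁`, and `z₁` fails to be dominant iff there exists
`i₂ ∈ I \ {i₀, i₁}` with `⟨α_{i₁}, α_{i₂}^∨⟩ = −1` and `⟨z, α_{i₂}^∨⟩ = 0`; such an `i₂`,
if it exists, is unique, and `⟨z₁, α_i^∨⟩ ≥ 0` for all `i ∈ I \ {i₂}`. -/
theorem statement8 {ι V : Type*} [Fintype ι] [DecidableEq ι] [AddCommGroup V] [Module ℝ V]
    (P : RootSystemData ι V) (x y z : V) (i₀ i₁ : ι)
    (hx : x ∈ P.rootLattice) (hxdom : P.IsDominant x)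
    (hz : z = y + (1 / 2 : ℝ) • P.sroot i₀) (hzQ : z ∈ P.rootLattice)
    (h1 : P.coroot (P.sroot i₀) y = 0)
    (h2 : P.IsDominant y)
    (h3 : ∀ i, P.coweight i y ≤ P.coweight i x)
    (hznd : ¬ P.IsDominant z)
    (hi₁ : i₁ ≠ i₀) (hi₁p : P.coroot (P.sroot i₁) (P.sroot i₀) < -1)
    (hi₁z : P.coroot (P.sroot i₁) z = -1) :
    P.sref i₁ z = z + P.sroot i₁ ∧
    0 ≤ P.coroot (P.sroot i₀) (z + P.sroot i₁) ∧
    0 ≤ P.coroot (P.sroot i₁) (z + P.sroot i₁) ∧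
    (¬ P.IsDominant (z + P.sroot i₁) ↔ ∃ i₂, i₂ ≠ i₀ ∧ i₂ ≠ i₁ ∧
      P.coroot (P.sroot i₂) (P.sroot i₁) = -1 ∧ P.coroot (P.sroot i₂) z = 0) ∧
    (∀ i₂ i₂', (i₂ ≠ i₀ ∧ i₂ ≠ i₁ ∧
        P.coroot (P.sroot i₂) (P.sroot i₁) = -1 ∧ P.coroot (P.sroot i₂) z = 0) →
      (i₂' ≠ i₀ ∧ i₂' ≠ i₁ ∧
        P.coroot (P.sroot i₂') (P.sroot i₁) = -1 ∧ P.coroot (P.sroot i₂') z = 0) →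
      i₂ = i₂') ∧
    (∀ i₂, (i₂ ≠ i₀ ∧ i₂ ≠ i₁ ∧
        P.coroot (P.sroot i₂) (P.sroot i₁) = -1 ∧ P.coroot (P.sroot i₂) z = 0) →
      ∀ i, i ≠ i₂ → 0 ≤ P.coroot (P.sroot i) (z + P.sroot i₁)) := by
  classical
  -- `A = ⟨α_{i₀}, α_{i₁}^∨⟩ ≤ -2`
  have hA2 : P.coroot (P.sroot i₁) (P.sroot i₀) ≤ -2 := by
    obtain ⟨n, hn⟩ := P.crystallographic _ (P.sroot_mem i₁) _ (P.sroot_mem i₀)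
    have h' : n < -1 := by exact_mod_cast (hn ▸ hi₁p)
    rw [hn]
    exact_mod_cast (by omega : n ≤ -2)
  have hA0 : P.coroot (P.sroot i₁) (P.sroot i₀) ≠ 0 := by linarith
  have hBle : P.coroot (P.sroot i₀) (P.sroot i₁) ≤ -1 :=
    aux_offdiag_neg P i₁ i₀ hi₁ hA0
  -- `B = ⟨α_{i₁}, α_{i₀}^∨⟩ = -1`
  have hBnot : ¬ (P.coroot (P.sroot i₀) (P.sroot i₁) ≤ -2) := by
    intro hB2
    refine aux_no_affine P
      (fun j => (if j = i₀ then (1:ℝ) else 0) + (if j = i₁ then 1 else 0))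
      (fun j => by split_ifs <;> norm_num) i₀ ?_ ?_
    · simp [Ne.symm hi₁]
    · intro k hk
      have hks : k = i₀ ∨ k = i₁ := by
        by_contra hcon
        push_neg at hcon
        exact hk (by simp [hcon.1, hcon.2])
      simp only [add_mul, Finset.sum_add_distrib, aux_sum_delta, one_mul]
      rcases hks with rfl | rfl
      · rw [P.coroot_self _ (P.sroot_mem k)]; linarith
      · rw [P.coroot_self _ (P.sroot_mem k)]; linarith
  have hB1 : P.coroot (P.sroot i₀) (P.sroot i₁) = -1 := by
    obtain ⟨n, hn⟩ := P.crystallographic _ (P.sroot_mem i₀) _ (P.sroot_mem i₁)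
    rw [hn] at hBle hBnot ⊢
    have ha : n ≤ -1 := by exact_mod_cast hBle
    have hb : ¬ (n ≤ -2) := fun h => hBnot (by exact_mod_cast h)
    have : n = -1 := by omega
    rw [this]; norm_num
  -- pairings with z
  have hz0 : P.coroot (P.sroot i₀) z = 1 := by
    rw [hz, map_add, map_smul, h1, P.coroot_self _ (P.sroot_mem i₀)]
    norm_num
  have hzi : ∀ i, P.coroot (P.sroot i) z
      = P.coroot (P.sroot i) y + (1/2) * P.coroot (P.sroot i) (P.sroot i₀) := by
    intro i
    rw [hz, map_add, map_smul]
    norm_num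
  have hzint : ∀ i, ∃ n : ℤ, P.coroot (P.sroot i) z = n := fun i => aux_lattice_int P i z hzQ
  -- no other negative simple pairing with z
  have hN2 : ∀ i, i ≠ i₀ → i ≠ i₁ → 0 ≤ P.coroot (P.sroot i) z := by
    intro i hii0 hii1
    have hcle : P.coroot (P.sroot i) (P.sroot i₀) ≤ 0 := aux_offdiag_nonpos P i i₀ hii0
    rcases le_or_gt (-1 : ℝ) (P.coroot (P.sroot i) (P.sroot i₀)) with hge | hlt
    · rcases aux_int_dichot (hzint i) with h | h
      · exact h
      · exfalso
        have hy := h2 i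
        have := hzi i
        linarith
    · exfalso
      have hC2 : P.coroot (P.sroot i) (P.sroot i₀) ≤ -2 := by
        obtain ⟨n, hn⟩ := P.crystallographic _ (P.sroot_mem i) _ (P.sroot_mem i₀)
        have h' : n < -1 := by exact_mod_cast (hn ▸ hlt)
        rw [hn]
        exact_mod_cast (by omega : n ≤ -2)
      have hC0 : P.coroot (P.sroot i) (P.sroot i₀) ≠ 0 := by linarith
      have hrev : P.coroot (P.sroot i₀) (P.sroot i) ≤ -1 := aux_offdiag_neg P i i₀ hii0 hC0
      have h10 : P.coroot (P.sroot i₁) (P.sroot i) ≤ 0 :=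
        aux_offdiag_nonpos P i₁ i (Ne.symm hii1)
      have h01 : P.coroot (P.sroot i) (P.sroot i₁) ≤ 0 := aux_offdiag_nonpos P i i₁ hii1
      refine aux_no_affine P
        (fun j => (if j = i₀ then (2:ℝ) else 0) + (if j = i then 1 else 0)
          + (if j = i₁ then 1 else 0))
        (fun j => by split_ifs <;> norm_num) i₀ ?_ ?_
      · simp [Ne.symm hii0, Ne.symm hi₁]
      · intro k hk
        have hks : k = i₀ ∨ k = i ∨ k = i₁ := by
          by_contra hcon
          push_neg at hcon
          exact hk (by simp [hcon.1, hcon.2.1, hcon.2.2])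
        simp only [add_mul, Finset.sum_add_distrib, aux_sum_delta, one_mul]
        rcases hks with rfl | rfl | rfl
        · rw [P.coroot_self _ (P.sroot_mem k)]; linarith
        · rw [P.coroot_self _ (P.sroot_mem k)]; linarith
        · rw [P.coroot_self _ (P.sroot_mem k)]; linarith
  -- no chain `i₀ ⇒ i₁ ⇒ i`
  have hE4 : ∀ i, i ≠ i₀ → i ≠ i₁ → P.coroot (P.sroot i) (P.sroot i₁) ≤ -2 → False := by
    intro i hii0 hii1 hD2
    have hD0 : P.coroot (P.sroot i) (P.sroot i₁) ≠ 0 := by linarith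
    have hrev : P.coroot (P.sroot i₁) (P.sroot i) ≤ -1 := aux_offdiag_neg P i i₁ hii1 hD0
    have h0i : P.coroot (P.sroot i₀) (P.sroot i) ≤ 0 :=
      aux_offdiag_nonpos P i₀ i (Ne.symm hii0)
    have hi0 : P.coroot (P.sroot i) (P.sroot i₀) ≤ 0 := aux_offdiag_nonpos P i i₀ hii0
    refine aux_no_affine P
      (fun j => (if j = i₀ then (2:ℝ) else 0) + (if j = i₁ then 2 else 0)
        + (if j = i then 1 else 0))
      (fun j => by split_ifs <;> norm_num) i₀ ?_ ?_
    · simp [Ne.symm hi₁, Ne.symm hii0]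
    · intro k hk
      have hks : k = i₀ ∨ k = i₁ ∨ k = i := by
        by_contra hcon
        push_neg at hcon
        exact hk (by simp [hcon.1, hcon.2.1, hcon.2.2])
      simp only [add_mul, Finset.sum_add_distrib, aux_sum_delta, one_mul]
      rcases hks with rfl | rfl | rfl
      · rw [P.coroot_self _ (P.sroot_mem k)]; linarith
      · rw [P.coroot_self _ (P.sroot_mem k)]; linarith
      · rw [P.coroot_self _ (P.sroot_mem k)]; linarith
  -- uniqueness of `i₂`
  have huniq : ∀ i₂ i₂', (i₂ ≠ i₀ ∧ i₂ ≠ i₁ ∧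
        P.coroot (P.sroot i₂) (P.sroot i₁) = -1 ∧ P.coroot (P.sroot i₂) z = 0) →
      (i₂' ≠ i₀ ∧ i₂' ≠ i₁ ∧
        P.coroot (P.sroot i₂') (P.sroot i₁) = -1 ∧ P.coroot (P.sroot i₂') z = 0) →
      i₂ = i₂' := by
    intro p q hp hq
    by_contra hne
    obtain ⟨hp0, hp1, hpD, hpz⟩ := hp
    obtain ⟨hq0, hq1, hqD, hqz⟩ := hq
    have hrevp : P.coroot (P.sroot i₁) (P.sroot p) ≤ -1 :=
      aux_offdiag_neg P p i₁ hp1 (by rw [hpD]; norm_num)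
    have hrevq : P.coroot (P.sroot i₁) (P.sroot q) ≤ -1 :=
      aux_offdiag_neg P q i₁ hq1 (by rw [hqD]; norm_num)
    have h0p : P.coroot (P.sroot i₀) (P.sroot p) ≤ 0 :=
      aux_offdiag_nonpos P i₀ p (Ne.symm hp0)
    have h0q : P.coroot (P.sroot i₀) (P.sroot q) ≤ 0 :=
      aux_offdiag_nonpos P i₀ q (Ne.symm hq0)
    have hp0' : P.coroot (P.sroot p) (P.sroot i₀) ≤ 0 := aux_offdiag_nonpos P p i₀ hp0
    have hq0' : P.coroot (P.sroot q) (P.sroot i₀) ≤ 0 := aux_offdiag_nonpos P q i₀ hq0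
    have hpq : P.coroot (P.sroot p) (P.sroot q) ≤ 0 := aux_offdiag_nonpos P p q hne
    have hqp : P.coroot (P.sroot q) (P.sroot p) ≤ 0 := aux_offdiag_nonpos P q p (Ne.symm hne)
    refine aux_no_affine P
      (fun j => (if j = i₁ then (2:ℝ) else 0) + (if j = i₀ then 2 else 0)
        + (if j = p then 1 else 0) + (if j = q then 1 else 0))
      (fun j => by split_ifs <;> norm_num) i₁ ?_ ?_
    · simp [hi₁, Ne.symm hp1, Ne.symm hq1]
    · intro k hk
      have hks : k = i₁ ∨ k = i₀ ∨ k = p ∨ k = q := by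
        by_contra hcon
        push_neg at hcon
        exact hk (by simp [hcon.1, hcon.2.1, hcon.2.2.1, hcon.2.2.2])
      simp only [add_mul, Finset.sum_add_distrib, aux_sum_delta, one_mul]
      rcases hks with rfl | rfl | rfl | rfl
      · rw [P.coroot_self _ (P.sroot_mem k)]; linarith
      · rw [P.coroot_self _ (P.sroot_mem k)]; linarith
      · rw [P.coroot_self _ (P.sroot_mem k)]; linarith
      · rw [P.coroot_self _ (P.sroot_mem k)]; linarith
  -- pairings with `z₁ = z + α_{i₁}`
  have hz1 : ∀ i, P.coroot (P.sroot i) (z + P.sroot i₁)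
      = P.coroot (P.sroot i) z + P.coroot (P.sroot i) (P.sroot i₁) := fun i => map_add _ _ _
  have hpart2 : 0 ≤ P.coroot (P.sroot i₀) (z + P.sroot i₁) := by
    rw [hz1, hz0, hB1]; norm_num
  have hpart3 : 0 ≤ P.coroot (P.sroot i₁) (z + P.sroot i₁) := by
    rw [hz1, hi₁z, P.coroot_self _ (P.sroot_mem i₁)]; norm_num
  -- any witness of non-dominance of `z₁` has the `i₂` pattern
  have hwitness : ∀ i, P.coroot (P.sroot i) (z + P.sroot i₁) < 0 →
      i ≠ i₀ ∧ i ≠ i₁ ∧ P.coroot (P.sroot i) (P.sroot i₁) = -1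
        ∧ P.coroot (P.sroot i) z = 0 := by
    intro i hneg
    have hii0 : i ≠ i₀ := by rintro rfl; exact absurd hneg (not_lt.mpr hpart2)
    have hii1 : i ≠ i₁ := by rintro rfl; exact absurd hneg (not_lt.mpr hpart3)
    have hzi0 : 0 ≤ P.coroot (P.sroot i) z := hN2 i hii0 hii1
    have hDle : P.coroot (P.sroot i) (P.sroot i₁) ≤ 0 := aux_offdiag_nonpos P i i₁ hii1
    rw [hz1] at hneg
    have hD1 : P.coroot (P.sroot i) (P.sroot i₁) = -1 := by
      rcases aux_int_dichot (P.crystallographic _ (P.sroot_mem i) _ (P.sroot_mem i₁))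
        with h | h
      · exfalso; linarith
      · by_contra hne1
        have hD2 : P.coroot (P.sroot i) (P.sroot i₁) ≤ -2 := by
          obtain ⟨n, hn⟩ := P.crystallographic _ (P.sroot_mem i) _ (P.sroot_mem i₁)
          rw [hn] at h hne1 ⊢
          have ha : n ≤ -1 := by exact_mod_cast h
          have hb : n ≠ -1 := fun hh => hne1 (by rw [hh]; norm_num)
          exact_mod_cast (by omega : n ≤ -2)
        exact hE4 i hii0 hii1 hD2
    have hzz : P.coroot (P.sroot i) z = 0 := by
      obtain ⟨nz, hnz⟩ := hzint i
      rw [hD1] at hneg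
      rw [hnz] at hzi0 hneg ⊢
      have ha : 0 ≤ nz := by exact_mod_cast hzi0
      have hb : (nz : ℝ) < 1 := by linarith
      have hc : nz < 1 := by exact_mod_cast hb
      have : nz = 0 := by omega
      rw [this]; norm_num
    exact ⟨hii0, hii1, hD1, hzz⟩
  -- part 1
  have hpart1 : P.sref i₁ z = z + P.sroot i₁ := by
    show Module.reflection (P.coroot_self (P.sroot i₁) (P.sroot_mem i₁)) z = z + P.sroot i₁
    rw [Module.reflection_apply, hi₁z]
    module
  refine ⟨hpart1, hpart2, hpart3, ?_, huniq, ?_⟩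
  · constructor
    · intro hnd
      simp only [RootSystemData.IsDominant, not_forall, not_le] at hnd
      obtain ⟨i, hi⟩ := hnd
      exact ⟨i, hwitness i hi⟩
    · rintro ⟨i₂, h0', h1', hD, hzz⟩ hdom
      have := hdom i₂
      rw [hz1 i₂, hD, hzz] at this
      linarith
  · intro i₂ hp i hii2
    by_contra hneg
    push_neg at hneg
    exact hii2 (huniq i i₂ (hwitness i hneg) hp)
end

section
/- Let x ∈ Q(R) be dominant and let z ∈ Q(R) satisfy ⟨z, ϖ_i⟩ ≤ ⟨x, ϖ_i⟩ for all i ∈ I. Suppose i₁, …, i_k ∈ I are distinct indices such that ⟨z, α_{i₁}^∨⟩ = −1, ⟨z, α_{i_j}^∨⟩ = 0 for j = 2, …, k, and ⟨α_{i_j}, α_{i_{j+1}}^∨⟩ = −1 for j = 1, …, k−1. Then the strict inequality ⟨z, ϖ_{i_j}⟩ < ⟨x, ϖ_{i_j}⟩ holds for every j = 1, …, k. -/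
open Module

/-- Let `x ∈ Q(R)` be dominant and let `z ∈ Q(R)` satisfy
`⟨z, ϖ_i⟩ ≤ ⟨x, ϖ_i⟩` for all `i ∈ I`. Suppose `i₁, …, i_k ∈ I` are distinct indices such
that `⟨z, α_{i₁}^∨⟩ = −1`, `⟨z, α_{i_j}^∨⟩ = 0` for `j = 2, …, k`, and
`⟨α_{i_j}, α_{i_{j+1}}^∨⟩ = −1` for `j = 1, …, k−1`. Then the strict inequality
`⟨z, ϖ_{i_j}⟩ < ⟨x, ϖ_{i_j}⟩` holds for every `j = 1, …, k`. -/
theorem statement11 {ι V : Type*} [Fintype ι] [DecidableEq ι] [AddCommGroup V] [Module ℝ V]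
    (P : RootSystemData ι V) (x z : V)
    (hx : x ∈ P.rootLattice) (hxdom : P.IsDominant x)
    (hzQ : z ∈ P.rootLattice)
    (hzx : ∀ i, P.coweight i z ≤ P.coweight i x)
    (k : ℕ) (hk : 0 < k) (ind : Fin k → ι) (hinj : Function.Injective ind)
    (hb : P.coroot (P.sroot (ind ⟨0, hk⟩)) z = -1)
    (hc : ∀ j : Fin k, 0 < j.1 → P.coroot (P.sroot (ind j)) z = 0)
    (hd : ∀ j : ℕ, ∀ hj : j + 1 < k,
      P.coroot (P.sroot (ind ⟨j + 1, hj⟩)) (P.sroot (ind ⟨j, Nat.lt_of_succ_lt hj⟩)) = -1) :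
    ∀ j : Fin k, P.coweight (ind j) z < P.coweight (ind j) x := by
  classical
  -- coweights extract coefficients of simple-root combinations
  have hco : ∀ (c : ι → ℝ) (i : ι), P.coweight i (∑ j, c j • P.sroot j) = c i := by
    intro c i
    simp [map_sum, map_smul, P.coweight_sroot, smul_eq_mul, mul_ite, Finset.sum_ite_eq]
  -- every element of V is the sum of its coweight coordinates times simple roots
  have hrep : ∀ v : V, (∑ i, P.coweight i v • P.sroot i) = v := by
    set T : V →ₗ[ℝ] V := ∑ i, (P.coweight i).smulRight (P.sroot i) with hT
    have hTapp : ∀ v, T v = ∑ i, P.coweight i v • P.sroot i := by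
      intro v; simp [hT, LinearMap.sum_apply]
    have hroot : ∀ a ∈ P.isRoot, T a = a := by
      intro a ha
      rcases P.base a ha with ⟨c, hc⟩ | ⟨c, hc⟩
      · rw [hTapp, hc]
        refine Finset.sum_congr rfl fun i _ => ?_
        rw [hco]
      · rw [hTapp, hc]
        have : ∀ i, P.coweight i (-∑ j, (c j : ℝ) • P.sroot j) = -(c i : ℝ) := by
          intro i; rw [map_neg, hco]
        refine Eq.trans (Finset.sum_congr rfl fun i _ => by rw [this]) ?_
        simp [neg_smul, Finset.sum_neg_distrib]
    have hle : Submodule.span ℝ P.isRoot ≤ LinearMap.eqLocus T LinearMap.id := by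
      rw [Submodule.span_le]
      intro a ha
      exact hroot a ha
    rw [P.span_top] at hle
    intro v
    have : T v = v := hle (Submodule.mem_top (x := v))
    rw [← hTapp, this]
  -- off-diagonal Cartan entries are nonpositive
  have hcartan : ∀ i j : ι, i ≠ j → P.coroot (P.sroot j) (P.sroot i) ≤ 0 := by
    intro i j hij
    by_contra h
    push_neg at h
    have hbmem := P.reflect_mem _ (P.sroot_mem j) _ (P.sroot_mem i)
    set n := P.coroot (P.sroot j) (P.sroot i) with hn
    rcases P.base _ hbmem with ⟨c, hc⟩ | ⟨c, hc⟩
    · have := congrArg (P.coweight j) hc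
      rw [hco (fun m => (c m : ℝ))] at this
      rw [map_sub, map_smul, P.coweight_sroot, P.coweight_sroot, if_neg (Ne.symm hij),
        if_pos rfl, smul_eq_mul, mul_one] at this
      have hcj : (0:ℝ) ≤ (c j : ℝ) := Nat.cast_nonneg _
      linarith
    · have := congrArg (P.coweight i) hc
      rw [map_neg, hco (fun m => (c m : ℝ))] at this
      rw [map_sub, map_smul, P.coweight_sroot, P.coweight_sroot, if_pos rfl,
        if_neg hij, smul_eq_mul, mul_zero, sub_zero] at this
      have hcj : (0:ℝ) ≤ (c i : ℝ) := Nat.cast_nonneg _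
      linarith
  set d : ι → ℝ := fun i => P.coweight i x - P.coweight i z with hdd
  have hd0 : ∀ i, 0 ≤ d i := fun i => sub_nonneg.2 (hzx i)
  have hsum : ∀ a : ι, P.coroot (P.sroot a) x - P.coroot (P.sroot a) z
      = ∑ m, d m * P.coroot (P.sroot a) (P.sroot m) := by
    intro a
    have : P.coroot (P.sroot a) (x - z) = P.coroot (P.sroot a) (∑ m, d m • P.sroot m) := by
      congr 1
      rw [← hrep (x - z)]
      refine Finset.sum_congr rfl fun m _ => ?_
      rw [map_sub]
    rw [map_sub] at this
    rw [this, map_sum]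
    refine Finset.sum_congr rfl fun m _ => ?_
    rw [map_smul, smul_eq_mul]
  have key : ∀ n : ℕ, ∀ hn : n < k, 0 < d (ind ⟨n, hn⟩) := by
    intro n
    induction n with
    | zero =>
      intro hn
      rcases lt_or_eq_of_le (hd0 (ind ⟨0, hn⟩)) with h | h
      · exact h
      have h0 : d (ind ⟨0, hn⟩) = 0 := h.symm
      exfalso
      set a := ind ⟨0, hn⟩ with ha
      have hge : (1:ℝ) ≤ P.coroot (P.sroot a) x - P.coroot (P.sroot a) z := by
        have := hxdom a
        have hb' : P.coroot (P.sroot a) z = -1 := hb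
        linarith
      have hle : P.coroot (P.sroot a) x - P.coroot (P.sroot a) z ≤ 0 := by
        rw [hsum a]
        refine Finset.sum_nonpos fun m _ => ?_
        by_cases hma : m = a
        · rw [hma, h0, zero_mul]
        · exact mul_nonpos_of_nonneg_of_nonpos (hd0 m) (hcartan m a hma)
      linarith
    | succ p ih =>
      intro hn
      rcases lt_or_eq_of_le (hd0 (ind ⟨p + 1, hn⟩)) with h | h
      · exact h
      have h0 : d (ind ⟨p + 1, hn⟩) = 0 := h.symm
      exfalso
      set a := ind ⟨p + 1, hn⟩ with ha
      set b := ind ⟨p, Nat.lt_of_succ_lt hn⟩ with hbdef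
      have hba : b ≠ a := by
        intro hEq
        have := hinj hEq
        simp [Fin.ext_iff] at this
      have hdb : 0 < d b := ih (Nat.lt_of_succ_lt hn)
      have hC : P.coroot (P.sroot a) (P.sroot b) = -1 := hd p hn
      have hge : (0:ℝ) ≤ P.coroot (P.sroot a) x - P.coroot (P.sroot a) z := by
        have h1 := hxdom a
        have h2 : P.coroot (P.sroot a) z = 0 := hc ⟨p + 1, hn⟩ (Nat.succ_pos p)
        linarith
      have hle : P.coroot (P.sroot a) x - P.coroot (P.sroot a) z
          ≤ d b * P.coroot (P.sroot a) (P.sroot b) := by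
        rw [hsum a]
        have hstep : ∀ m ∈ Finset.univ, d m * P.coroot (P.sroot a) (P.sroot m)
            ≤ if m = b then d b * P.coroot (P.sroot a) (P.sroot b) else 0 := by
          intro m _
          by_cases hmb : m = b
          · rw [if_pos hmb, hmb]
          · rw [if_neg hmb]
            by_cases hma : m = a
            · rw [hma, h0, zero_mul]
            · exact mul_nonpos_of_nonneg_of_nonpos (hd0 m) (hcartan m a hma)
        calc (∑ m, d m * P.coroot (P.sroot a) (P.sroot m))
            ≤ ∑ m, if m = b then d b * P.coroot (P.sroot a) (P.sroot b) else 0 :=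
              Finset.sum_le_sum hstep
          _ = d b * P.coroot (P.sroot a) (P.sroot b) := by
              rw [Finset.sum_ite_eq' Finset.univ b]
              simp
      rw [hC] at hle
      nlinarith
  intro j
  have := key j.1 j.2
  have hj : (⟨j.1, j.2⟩ : Fin k) = j := rfl
  rw [hj] at this
  have := sub_pos.1 this
  linarith [this]
end
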